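/- arXiv:2507.14247 — 5 statements merged into one kernel-verified Lean document; each statement's English description precedes it below -/
import Mathlib

section
/- For every n ≥ 1, the map 𝔮 : W_n(K^sep)^× → W_n(K^sep)^×, x ↦ F(x)·x^{-1}, is a surjective homomorphism of abelian groups whose kernel is exactly W_n(F_p)^×, the group of units of W_n(K^sep) all of whose components lie in the prime field F_p. -/
noncomputable section

open WittVector

/-- Componentwise map on truncated Witt vectors induced by a ring homomorphism. -/
noncomputable def TruncatedWittVector.mapRingHom (p n : ℕ) [hp : Fact p.Prime]
    {R S : Type*} [CommRing R] [CommRing S] (f : R →+* S) :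
    TruncatedWittVector p n R →+* TruncatedWittVector p n S :=
  RingHom.liftOfRightInverse (WittVector.truncate n) TruncatedWittVector.out
    (fun x => x.truncateFun_out)
    ⟨(WittVector.truncate n).comp (WittVector.map f), by
      intro x hx
      rw [RingHom.mem_ker] at hx ⊢
      rw [RingHom.comp_apply, ← RingHom.mem_ker, WittVector.mem_ker_truncate]
      rw [← RingHom.mem_ker, WittVector.mem_ker_truncate] at hx
      intro i hi
      rw [WittVector.map_coeff, hx i hi, map_zero]⟩

/-- The map `𝔮 x = F(x) · x⁻¹` on the unit group of truncated Witt vectors,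
where `F` is the (componentwise `p`-th power) Frobenius. -/
noncomputable def wittQ (p n : ℕ) [Fact p.Prime] (R : Type*) [CommRing R] [CharP R p] :
    (TruncatedWittVector p n R)ˣ →* (TruncatedWittVector p n R)ˣ :=
  (Units.map (TruncatedWittVector.mapRingHom p n (frobenius R p)).toMonoidHom) /
    (MonoidHom.id _)

/-- The map `𝔮 x = F(x) · x⁻¹` on the unit group of (full) Witt vectors. -/
noncomputable def wittQFull (p : ℕ) [Fact p.Prime] (R : Type*) [CommRing R] [CharP R p] :
    (WittVector p R)ˣ →* (WittVector p R)ˣ :=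
  (Units.map (WittVector.map (frobenius R p)).toMonoidHom) / (MonoidHom.id _)

/-- The unit-group homomorphism `W_n(K)ˣ → W_n(L)ˣ` induced by an algebra map. -/
noncomputable def wittIncl (p n : ℕ) [Fact p.Prime] (K L : Type*) [CommRing K] [CommRing L]
    [Algebra K L] : (TruncatedWittVector p n K)ˣ →* (TruncatedWittVector p n L)ˣ :=
  Units.map (TruncatedWittVector.mapRingHom p n (algebraMap K L)).toMonoidHom

/-- The subfield `K(y₀, …, y_{n-1})` of `Ω` generated over `K` by the components of a
truncated Witt vector `y` over `Ω`. -/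
noncomputable def wittGenField (p n : ℕ) (K Ω : Type*) [Field K] [Field Ω] [Algebra K Ω]
    (y : TruncatedWittVector p n Ω) : IntermediateField K Ω :=
  IntermediateField.adjoin K (Set.range fun i => y.coeff i)

namespace ASWAux

open WittVector Polynomial

variable {p : ℕ} [hp : Fact p.Prime]

lemma iter_versch_coeff_lt {R : Type*} [CommRing R] (y : WittVector p R) :
    ∀ m i, i < m → (verschiebung^[m] y).coeff i = 0 := by
  intro m
  induction m with
  | zero => intro i hi; exact absurd hi (Nat.not_lt_zero i)
  | succ m ih =>
    intro i hi
    rw [Function.iterate_succ_apply']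
    cases i with
    | zero => exact verschiebung_coeff_zero _
    | succ j => rw [verschiebung_coeff_succ]; exact ih j (Nat.lt_of_succ_lt_succ hi)

lemma eq_iter_versch {R : Type*} [CommRing R] {x : WittVector p R} {m : ℕ}
    (h : ∀ i < m, x.coeff i = 0) :
    x = verschiebung^[m] (WittVector.mk p fun i => x.coeff (i + m)) := by
  ext j
  rcases lt_or_ge j m with hj | hj
  · rw [h j hj, iter_versch_coeff_lt _ m j hj]
  · obtain ⟨i, rfl⟩ : ∃ i, j = i + m := ⟨j - m, (Nat.sub_add_cancel hj).symm⟩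
    rw [iterate_verschiebung_coeff, WittVector.coeff_mk]

lemma iter_versch_sub {R : Type*} [CommRing R] (x y : WittVector p R) (m : ℕ) :
    verschiebung^[m] (x - y) = verschiebung^[m] x - verschiebung^[m] y := by
  induction m with
  | zero => simp
  | succ m ih => simp only [Function.iterate_succ_apply', ih, map_sub]

lemma iter_versch_add {R : Type*} [CommRing R] (x y : WittVector p R) (m : ℕ) :
    verschiebung^[m] (x + y) = verschiebung^[m] x + verschiebung^[m] y := by
  induction m with
  | zero => simp
  | succ m ih => simp only [Function.iterate_succ_apply', ih, map_add]

lemma ghost0 {R : Type*} [CommRing R] (x : WittVector p R) :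
    ghostComponent 0 x = x.coeff 0 := by
  rw [ghostComponent_apply, wittPolynomial_zero, MvPolynomial.aeval_X]

lemma sub_coeff_zero {R : Type*} [CommRing R] (x y : WittVector p R) :
    (x - y).coeff 0 = x.coeff 0 - y.coeff 0 := by
  rw [← ghost0, ← ghost0, ← ghost0, map_sub]

section CharP

variable {k : Type*} [CommRing k] [CharP k p]

lemma mul_coeff_eq_zero {x y : WittVector p k} {m l : ℕ}
    (hx : ∀ i < m, x.coeff i = 0) (hy : ∀ i < l, y.coeff i = 0) :
    ∀ i < m + l, (x * y).coeff i = 0 := by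
  intro i hi
  rw [eq_iter_versch hx, eq_iter_versch hy, iterate_verschiebung_mul]
  exact iter_versch_coeff_lt _ _ _ hi

lemma pow_coeff_eq_zero {x : WittVector p k} (hx : x.coeff 0 = 0) :
    ∀ n, ∀ i < n, (x ^ n).coeff i = 0 := by
  intro n
  induction n with
  | zero => intro i hi; exact absurd hi (Nat.not_lt_zero i)
  | succ n ih =>
    intro i hi
    rw [pow_succ]
    exact mul_coeff_eq_zero ih (fun j hj => by rwa [Nat.lt_one_iff.mp hj]) i hi

lemma frob_versch_iter (x : WittVector p k) (m : ℕ) :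
    WittVector.frobenius (verschiebung^[m] x) = verschiebung^[m] (WittVector.frobenius x) := by
  induction m with
  | zero => rfl
  | succ m ih =>
    rw [Function.iterate_succ_apply', Function.iterate_succ_apply', ← ih,
      verschiebung_frobenius_comm]

lemma frob_teich (t : k) :
    WittVector.frobenius (WittVector.teichmuller p t) = WittVector.teichmuller p (t ^ p) := by
  ext i
  rw [coeff_frobenius_charP]
  cases i with
  | zero => rw [teichmuller_coeff_zero, teichmuller_coeff_zero]
  | succ j =>
    rw [teichmuller_coeff_pos p _ _ (Nat.succ_pos j), teichmuller_coeff_pos p _ _ (Nat.succ_pos j),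
      zero_pow hp.out.ne_zero]

end CharP

section Truncated

variable {n : ℕ} {R S : Type*} [CommRing R] [CommRing S]

lemma truncate_out (y : TruncatedWittVector p n R) : WittVector.truncate n y.out = y :=
  y.truncateFun_out

lemma mapRingHom_truncate (f : R →+* S) (x : WittVector p R) :
    TruncatedWittVector.mapRingHom p n f (WittVector.truncate n x)
      = WittVector.truncate n (WittVector.map f x) :=
  RingHom.liftOfRightInverse_comp_apply _ _ _ _ x

lemma mapRingHom_coeff (f : R →+* S) (y : TruncatedWittVector p n R) (i : Fin n) :
    (TruncatedWittVector.mapRingHom p n f y).coeff i = f (y.coeff i) := by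
  conv_lhs => rw [← truncate_out y]
  rw [mapRingHom_truncate, WittVector.coeff_truncate, WittVector.map_coeff,
    TruncatedWittVector.coeff_out]

lemma coeff_zero_mul (u v : TruncatedWittVector p n R) (i0 : Fin n) (h : (i0 : ℕ) = 0) :
    (u * v).coeff i0 = u.coeff i0 * v.coeff i0 := by
  conv_lhs => rw [← truncate_out u, ← truncate_out v, ← map_mul]
  rw [WittVector.coeff_truncate, h, WittVector.mul_coeff_zero, ← h,
    TruncatedWittVector.coeff_out, TruncatedWittVector.coeff_out]

lemma coeff_zero_one (i0 : Fin n) (h : (i0 : ℕ) = 0) :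
    (1 : TruncatedWittVector p n R).coeff i0 = 1 := by
  rw [← map_one (WittVector.truncate (p := p) n), WittVector.coeff_truncate, h,
    WittVector.one_coeff_zero]

end Truncated

section Field

variable {k : Type*} [Field k] [CharP k p]

lemma isUnit_of_coeff_ne_zero {n : ℕ} (y : TruncatedWittVector p n k) (i0 : Fin n)
    (h0 : (i0 : ℕ) = 0) (h : y.coeff i0 ≠ 0) : IsUnit y := by
  set c := y.coeff i0 with hc
  set w : WittVector p k := 1 - y.out * WittVector.teichmuller p c⁻¹ with hwdef
  have hy0 : y.out.coeff 0 = c := by rw [← h0, TruncatedWittVector.coeff_out]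
  have hw0 : w.coeff 0 = 0 := by
    rw [hwdef, sub_coeff_zero, WittVector.one_coeff_zero, WittVector.mul_coeff_zero,
      teichmuller_coeff_zero, hy0, mul_inv_cancel₀ h, sub_self]
  have hnil : (WittVector.truncate n w) ^ n = 0 := by
    rw [← map_pow, ← RingHom.mem_ker, WittVector.mem_ker_truncate]
    exact pow_coeff_eq_zero hw0 n
  have hu : IsUnit (1 - WittVector.truncate n w) := IsNilpotent.isUnit_one_sub ⟨n, hnil⟩
  have key : 1 - WittVector.truncate n w
      = y * WittVector.truncate n (WittVector.teichmuller p c⁻¹) := by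
    rw [hwdef, map_sub, map_one, map_mul, truncate_out, sub_sub_cancel]
  rw [key] at hu
  exact isUnit_of_mul_isUnit_left hu

lemma pow_p_eq_self_iff (c : k) :
    c ^ p = c ↔ ∃ d : ZMod p, ZMod.castHom (dvd_refl p) k d = c := by
  classical
  constructor
  · intro h
    set g := ZMod.castHom (dvd_refl p) k with hg
    set f : k[X] := X ^ p - X with hf
    have hf0 : f ≠ 0 := FiniteField.X_pow_card_sub_X_ne_zero k hp.out.one_lt
    have hdeg : f.natDegree = p := FiniteField.X_pow_card_sub_X_natDegree_eq k hp.out.one_lt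
    have hsub : Finset.univ.image g ⊆ f.roots.toFinset := by
      intro z hz
      obtain ⟨d, _, rfl⟩ := Finset.mem_image.mp hz
      rw [Multiset.mem_toFinset, mem_roots hf0]
      simp only [f, IsRoot.def, eval_sub, eval_pow, eval_X, sub_eq_zero, ← map_pow,
        ZMod.pow_card]
    have hcard : (Finset.univ.image g).card = p := by
      rw [Finset.card_image_of_injective _ g.injective, Finset.card_univ, ZMod.card]
    have hle : f.roots.toFinset.card ≤ p := by
      refine le_trans (Multiset.toFinset_card_le _) ?_
      rw [← hdeg]
      exact Polynomial.card_roots' f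
    have heq : Finset.univ.image g = f.roots.toFinset :=
      Finset.eq_of_subset_of_card_le hsub (by omega)
    have hc : c ∈ f.roots.toFinset := by
      rw [Multiset.mem_toFinset, mem_roots hf0]
      simp [f, IsRoot.def, sub_eq_zero, h]
    rw [← heq] at hc
    obtain ⟨d, _, hd⟩ := Finset.mem_image.mp hc
    exact ⟨d, hd⟩
  · rintro ⟨d, rfl⟩
    rw [← map_pow, ZMod.pow_card]

variable [IsSepClosed k]

lemma core (m : ℕ) (a : WittVector p k) (ha : a.coeff 0 ≠ 0) :
    ∃ x : WittVector p k, x.coeff 0 ≠ 0 ∧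
      ∀ i < m + 1, (WittVector.map (_root_.frobenius k p) x).coeff i = (a * x).coeff i := by
  induction m with
  | zero =>
    haveI : NeZero ((p - 1 : ℕ) : k) := by
      constructor
      rw [Ne, CharP.cast_eq_zero_iff k p (p - 1)]
      intro hdvd
      have h2 := hp.out.two_le
      have := Nat.le_of_dvd (by omega) hdvd
      omega
    obtain ⟨t, ht⟩ := IsSepClosed.exists_pow_nat_eq (a.coeff 0) (p - 1)
    have ht0 : t ≠ 0 := by
      rintro rfl
      exact ha (by rw [← ht, zero_pow (by have := hp.out.two_le; omega)])
    refine ⟨WittVector.teichmuller p t, by rwa [teichmuller_coeff_zero], ?_⟩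
    intro i hi
    have hi0 : i = 0 := by omega
    subst hi0
    rw [WittVector.map_coeff, WittVector.mul_coeff_zero, teichmuller_coeff_zero,
      frobenius_def]
    calc t ^ p = t ^ (p - 1) * t := by
          rw [← pow_succ]; congr 1; have := hp.out.two_le; omega
      _ = a.coeff 0 * t := by rw [ht]
  | succ m ih =>
    obtain ⟨x, hx0, hx⟩ := ih
    set d := WittVector.map (_root_.frobenius k p) x - a * x with hd_def
    have hd : ∀ i < m + 1, d.coeff i = 0 := by
      rw [← WittVector.mem_ker_truncate, RingHom.mem_ker, hd_def, map_sub, sub_eq_zero]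
      apply TruncatedWittVector.ext
      intro i
      rw [WittVector.coeff_truncate, WittVector.coeff_truncate]
      exact hx i i.isLt
    set c0 := a.coeff 0 ^ p ^ (m + 1) with hc0
    have hc0ne : c0 ≠ 0 := pow_ne_zero _ ha
    obtain ⟨t, ht⟩ := IsSepClosed.exists_root_C_mul_X_pow_add_C_mul_X_add_C' p p 1 (-c0)
      (d.coeff (m + 1)) dvd_rfl hp.out.two_le (neg_ne_zero.mpr hc0ne)
    have ht' : t ^ p - t * c0 = -(d.coeff (m + 1)) := by linear_combination ht
    set z : WittVector p k := verschiebung^[m + 1] (WittVector.teichmuller p t) with hz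
    set x' := x + z with hx'
    have hz0 : z.coeff 0 = 0 := iter_versch_coeff_lt _ _ _ (Nat.succ_pos m)
    have hx'0 : x'.coeff 0 ≠ 0 := by
      rw [hx', WittVector.add_coeff_zero, hz0, add_zero]; exact hx0
    have hFz : WittVector.map (_root_.frobenius k p) z
        = verschiebung^[m + 1] (WittVector.teichmuller p (t ^ p)) := by
      rw [← frobenius_eq_map_frobenius, hz, frob_versch_iter, frob_teich]
    have haz : a * z = verschiebung^[m + 1]
        (WittVector.teichmuller p t * (WittVector.frobenius)^[m + 1] a) := by
      rw [hz, mul_comm, iterate_verschiebung_mul_left]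
    set E := WittVector.teichmuller p (t ^ p)
        - WittVector.teichmuller p t * (WittVector.frobenius)^[m + 1] a with hE
    have he : WittVector.map (_root_.frobenius k p) z - a * z = verschiebung^[m + 1] E := by
      rw [hFz, haz, hE, iter_versch_sub]
    have hE0 : E.coeff 0 = -(d.coeff (m + 1)) := by
      rw [hE, sub_coeff_zero, teichmuller_coeff_zero, WittVector.mul_coeff_zero,
        teichmuller_coeff_zero, iterate_frobenius_coeff]
      rw [← hc0]
      linear_combination ht'
    set D := WittVector.mk p (fun i => d.coeff (i + (m + 1))) with hD
    have hdD : d = verschiebung^[m + 1] D := eq_iter_versch hd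
    have hsum : WittVector.map (_root_.frobenius k p) x' - a * x'
        = verschiebung^[m + 1] (D + E) := by
      rw [hx', map_add, mul_add, iter_versch_add, ← hdD, ← he, hd_def]; ring
    have hDE0 : (D + E).coeff 0 = 0 := by
      rw [WittVector.add_coeff_zero, hD, WittVector.coeff_mk, hE0]
      simp
    have hzero : ∀ j < m + 1 + 1,
        (WittVector.map (_root_.frobenius k p) x' - a * x').coeff j = 0 := by
      intro j hj
      rw [hsum]
      rcases Nat.lt_succ_iff_lt_or_eq.mp hj with h | h
      · exact iter_versch_coeff_lt _ _ _ h
      · subst h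
        have := iterate_verschiebung_coeff (D + E) (m + 1) 0
        rw [zero_add] at this
        rw [this, hDE0]
    have htr : WittVector.truncate (m + 2) (WittVector.map (_root_.frobenius k p) x')
        = WittVector.truncate (m + 2) (a * x') := by
      rw [← sub_eq_zero, ← map_sub, ← RingHom.mem_ker, WittVector.mem_ker_truncate]
      exact hzero
    refine ⟨x', hx'0, ?_⟩
    intro i hi
    have h2 : i < m + 2 := hi
    have := congrArg (fun v => TruncatedWittVector.coeff (⟨i, h2⟩ : Fin (m + 2)) v) htr
    simpa only [WittVector.coeff_truncate] using this

end Field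

end ASWAux

/--
For every `n ≥ 1`, the map `𝔮 : Wₙ(Kˢᵉᵖ)ˣ → Wₙ(Kˢᵉᵖ)ˣ`, `x ↦ F(x)·x⁻¹`,
is a surjective homomorphism of abelian groups whose kernel is exactly `Wₙ(𝔽_p)ˣ`, the group
of units of `Wₙ(Kˢᵉᵖ)` all of whose components lie in the prime field `𝔽_p`.
-/
theorem stmt_0 (p : ℕ) [Fact p.Prime] (K Ksep : Type*) [Field K] [CharP K p]
    [Field Ksep] [Algebra K Ksep] [IsSepClosure K Ksep] [CharP Ksep p]
    (n : ℕ) (hn : 1 ≤ n) :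
    (∀ x y : (TruncatedWittVector p n Ksep)ˣ,
        wittQ p n Ksep (x * y) = wittQ p n Ksep x * wittQ p n Ksep y) ∧
    Function.Surjective (wittQ p n Ksep) ∧
    (∀ x : (TruncatedWittVector p n Ksep)ˣ,
        wittQ p n Ksep x = 1 ↔
          ∀ i : Fin n, ∃ c : ZMod p,
            ZMod.castHom (dvd_refl p) Ksep c
              = (x : TruncatedWittVector p n Ksep).coeff i) := by
  haveI : IsSepClosed Ksep := IsSepClosure.sep_closed K
  refine ⟨fun x y => map_mul _ x y, ?_, ?_⟩
  · -- surjectivity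
    intro b
    set i0 : Fin n := ⟨0, hn⟩ with hi0
    have hco : ((i0 : Fin n) : ℕ) = 0 := rfl
    have hb0 : (b : TruncatedWittVector p n Ksep).coeff i0 ≠ 0 := by
      intro h
      have h2 := ASWAux.coeff_zero_mul (b : TruncatedWittVector p n Ksep)
        ((b⁻¹ : (TruncatedWittVector p n Ksep)ˣ) : TruncatedWittVector p n Ksep) i0 hco
      rw [Units.mul_inv, ASWAux.coeff_zero_one i0 hco, h, zero_mul] at h2
      exact one_ne_zero h2
    set a : WittVector p Ksep := (b : TruncatedWittVector p n Ksep).out with ha_def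
    have ha0 : a.coeff 0 ≠ 0 := by
      have hco' := TruncatedWittVector.coeff_out (b : TruncatedWittVector p n Ksep) i0
      rw [hco] at hco'
      rw [ha_def, hco']
      exact hb0
    obtain ⟨x, hx0, hx⟩ := ASWAux.core (n - 1) a ha0
    have hmn : n - 1 + 1 = n := Nat.succ_pred_eq_of_pos hn
    set X := WittVector.truncate n x with hX
    have hX0 : X.coeff i0 ≠ 0 := by
      have := WittVector.coeff_truncate (p := p) x i0
      rw [hco] at this
      rw [hX, this]
      exact hx0
    obtain ⟨u, hu⟩ := ASWAux.isUnit_of_coeff_ne_zero X i0 hco hX0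
    refine ⟨u, ?_⟩
    have hmap : Units.map (TruncatedWittVector.mapRingHom p n (frobenius Ksep p)).toMonoidHom u
        = b * u := by
      apply Units.ext
      rw [Units.coe_map, Units.val_mul, hu]
      show TruncatedWittVector.mapRingHom p n (frobenius Ksep p) X
        = (b : TruncatedWittVector p n Ksep) * X
      have hbtr : (b : TruncatedWittVector p n Ksep) = WittVector.truncate n a :=
        (ASWAux.truncate_out _).symm
      rw [hX, ASWAux.mapRingHom_truncate, hbtr, ← map_mul]
      apply TruncatedWittVector.ext
      intro i
      rw [WittVector.coeff_truncate, WittVector.coeff_truncate]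
      refine hx i ?_
      have := i.isLt
      omega
    have hq : wittQ p n Ksep u
        = Units.map (TruncatedWittVector.mapRingHom p n (frobenius Ksep p)).toMonoidHom u / u :=
      rfl
    rw [hq, hmap, mul_div_cancel_right]
  · -- kernel
    intro x
    have hdiv : wittQ p n Ksep x
        = Units.map (TruncatedWittVector.mapRingHom p n (frobenius Ksep p)).toMonoidHom x / x :=
      rfl
    rw [hdiv, div_eq_one]
    constructor
    · intro h i
      rw [← ASWAux.pow_p_eq_self_iff]
      have h2 := congrArg
        (fun v : (TruncatedWittVector p n Ksep)ˣ => (v : TruncatedWittVector p n Ksep).coeff i) h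
      simp only [Units.coe_map, RingHom.toMonoidHom_eq_coe, MonoidHom.coe_coe] at h2
      rwa [ASWAux.mapRingHom_coeff, frobenius_def] at h2
    · intro h
      apply Units.ext
      rw [Units.coe_map]
      apply TruncatedWittVector.ext
      intro i
      show (TruncatedWittVector.mapRingHom p n (frobenius Ksep p)
        ((x : TruncatedWittVector p n Ksep))).coeff i = (x : TruncatedWittVector p n Ksep).coeff i
      rw [ASWAux.mapRingHom_coeff, frobenius_def]
      obtain ⟨c, hc⟩ := h i
      rw [← hc, ← map_pow, ZMod.pow_card]
end
end

section
/- For every a ∈ W_n(K)^× there exists y ∈ W_n(K^sep)^× with 𝔮(y) = a; any two such solutions generate the same subfield of K^sep, so the field K(𝔮^{-1}a) is well defined; the extension K(𝔮^{-1}a)/K is a finite Galois extension; and if a ≡ b modulo 𝔮W_n(K)^×, then K(𝔮^{-1}a) = K(𝔮^{-1}b). -/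
noncomputable section

open WittVector

/-! ### Auxiliary lemmas -/

namespace ASW

open WittVector Polynomial

variable {p : ℕ} [hp : Fact p.Prime]

section Maps

variable {n : ℕ} {R S T : Type*} [CommRing R] [CommRing S] [CommRing T]

theorem truncate_out' (x : TruncatedWittVector p n R) :
    WittVector.truncate n x.out = x :=
  x.truncateFun_out

theorem mapRingHom_truncate (f : R →+* S) (x : WittVector p R) :
    TruncatedWittVector.mapRingHom p n f (WittVector.truncate n x)
      = WittVector.truncate n (WittVector.map f x) :=
  RingHom.liftOfRightInverse_comp_apply _ _ _ _ x

theorem mapRingHom_coeff (f : R →+* S) (x : TruncatedWittVector p n R) (i : Fin n) :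
    (TruncatedWittVector.mapRingHom p n f x).coeff i = f (x.coeff i) := by
  conv_lhs => rw [← truncate_out' x]
  rw [mapRingHom_truncate, WittVector.coeff_truncate, WittVector.map_coeff,
    TruncatedWittVector.coeff_out]

theorem mapRingHom_comp_apply (g : S →+* T) (f : R →+* S) (x : TruncatedWittVector p n R) :
    TruncatedWittVector.mapRingHom p n g (TruncatedWittVector.mapRingHom p n f x)
      = TruncatedWittVector.mapRingHom p n (g.comp f) x := by
  apply TruncatedWittVector.ext
  intro i
  simp only [mapRingHom_coeff, RingHom.comp_apply]

theorem trunc_mul (x w : TruncatedWittVector p n R) :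
    x * w = WittVector.truncate n (x.out * w.out) := by
  rw [map_mul, truncate_out', truncate_out']

theorem coeff_out_eq (x : TruncatedWittVector p n R) (m : ℕ) :
    x.out.coeff m = if h : m < n then x.coeff ⟨m, h⟩ else 0 :=
  rfl

end Maps

section Q

variable {n : ℕ} {R S : Type*} [CommRing R] [CommRing S] [CharP R p] [CharP S p]

theorem wittQ_coe (u : (TruncatedWittVector p n R)ˣ) :
    ((wittQ p n R u : (TruncatedWittVector p n R)ˣ) : TruncatedWittVector p n R)
      = TruncatedWittVector.mapRingHom p n (frobenius R p) ↑u * ↑(u⁻¹) := by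
  show ((Units.map (TruncatedWittVector.mapRingHom p n (frobenius R p)).toMonoidHom u
      / u : (TruncatedWittVector p n R)ˣ) : TruncatedWittVector p n R) = _
  rw [div_eq_mul_inv, Units.val_mul, Units.coe_map]
  rfl

theorem wittQ_apply (u : (TruncatedWittVector p n R)ˣ) :
    wittQ p n R u
      = Units.map (TruncatedWittVector.mapRingHom p n (frobenius R p)).toMonoidHom u * u⁻¹ := by
  apply Units.ext
  rw [wittQ_coe, Units.val_mul]
  rfl

theorem wittQ_map (f : R →+* S) (u : (TruncatedWittVector p n R)ˣ) :
    wittQ p n S (Units.map (TruncatedWittVector.mapRingHom p n f).toMonoidHom u)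
      = Units.map (TruncatedWittVector.mapRingHom p n f).toMonoidHom (wittQ p n R u) := by
  have hcomm : ∀ x : TruncatedWittVector p n R,
      TruncatedWittVector.mapRingHom p n (frobenius S p)
          (TruncatedWittVector.mapRingHom p n f x)
        = TruncatedWittVector.mapRingHom p n f
          (TruncatedWittVector.mapRingHom p n (frobenius R p) x) := by
    intro x
    apply TruncatedWittVector.ext
    intro i
    simp only [mapRingHom_coeff, frobenius_def, map_pow]
  apply Units.ext
  rw [Units.coe_map, wittQ_coe, wittQ_coe, RingHom.toMonoidHom_eq_coe, MonoidHom.coe_coe, map_mul]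
  congr 1
  exact hcomm _

theorem mapFrobenius_eq_of_wittQ_eq_one (u : (TruncatedWittVector p n R)ˣ)
    (h : wittQ p n R u = 1) :
    TruncatedWittVector.mapRingHom p n (frobenius R p) (↑u : TruncatedWittVector p n R) = ↑u := by
  have h2 := wittQ_coe u
  rw [h] at h2
  have h3 : (1 : TruncatedWittVector p n R)
      = TruncatedWittVector.mapRingHom p n (frobenius R p) ↑u * ↑(u⁻¹) := h2
  calc TruncatedWittVector.mapRingHom p n (frobenius R p) (↑u : TruncatedWittVector p n R)
      = TruncatedWittVector.mapRingHom p n (frobenius R p) ↑u * (↑(u⁻¹) * ↑u) := by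
        rw [Units.inv_mul, mul_one]
    _ = ↑u := by rw [← mul_assoc, ← h3, one_mul]

end Q

section CharPCast

theorem exists_natCast_of_pow_eq {L : Type*} [Field L] [CharP L p]
    {c : L} (h : c ^ p = c) : ∃ m : ℕ, c = (m : L) := by
  classical
  set g : L[X] := X ^ p - X with hg
  have hmonic : g.Monic := by
    apply monic_X_pow_sub
    rw [degree_X]
    exact_mod_cast hp.out.one_lt
  have hg0 : g ≠ 0 := hmonic.ne_zero
  have hdeg : g.natDegree = p := by
    have hdeg' : g.degree = (p : ℕ) := by
      rw [hg, degree_sub_eq_left_of_degree_lt, degree_X_pow]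
      rw [degree_X_pow, degree_X]
      exact_mod_cast hp.out.one_lt
    exact natDegree_eq_of_degree_eq_some hdeg'
  have hfermat : ∀ m : ℕ, (m : L) ^ p = (m : L) := by
    intro m
    have h1 : (ZMod.castHom (dvd_refl p) L) ((m : ZMod p)) = (m : L) := map_natCast _ m
    rw [← h1, ← map_pow, ZMod.pow_card]
  have hroot : ∀ m : ℕ, m < p → (m : L) ∈ g.roots := by
    intro m _
    rw [mem_roots hg0]
    show g.eval _ = 0
    simp [hg, hfermat m]
  have hcroot : c ∈ g.roots := by
    rw [mem_roots hg0]
    show g.eval _ = 0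
    simp [hg, h]
  set T : Finset L := (Finset.range p).image (fun m : ℕ => (m : L)) with hT
  have hTsub : T ⊆ g.roots.toFinset := by
    intro x hx
    simp only [hT, Finset.mem_image, Finset.mem_range] at hx
    obtain ⟨m, hm, rfl⟩ := hx
    rw [Multiset.mem_toFinset]
    exact hroot m hm
  have hTcard : T.card = p := by
    rw [hT, Finset.card_image_of_injOn, Finset.card_range]
    intro a ha b hb hab
    exact CharP.natCast_injOn_Iio L p (by simpa using ha) (by simpa using hb) hab
  by_contra hc
  push_neg at hc
  have hcT : c ∉ T := by
    simp only [hT, Finset.mem_image, Finset.mem_range]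
    rintro ⟨m, _, rfl⟩
    exact hc m rfl
  have hsub : insert c T ⊆ g.roots.toFinset := by
    intro x hx
    rcases Finset.mem_insert.mp hx with rfl | hx
    · rw [Multiset.mem_toFinset]; exact hcroot
    · exact hTsub hx
  have h1 : (insert c T).card = p + 1 := by
    rw [Finset.card_insert_of_notMem hcT, hTcard]
  have h2 : g.roots.toFinset.card ≤ p := by
    refine le_trans (Multiset.toFinset_card_le _) ?_
    have h3 := g.card_roots'
    rwa [hdeg] at h3
  have h4 := Finset.card_le_card hsub
  omega

end CharPCast

section Mem

variable {n : ℕ} {K L : Type*} [Field K] [Field L] [Algebra K L]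

theorem coeff_mul_mem (E : IntermediateField K L) (x w : TruncatedWittVector p n L)
    (hx : ∀ i, x.coeff i ∈ E) (hw : ∀ i, w.coeff i ∈ E) (i : Fin n) :
    (x * w).coeff i ∈ E := by
  rw [trunc_mul, WittVector.coeff_truncate, WittVector.mul_coeff]
  rw [WittVector.peval, MvPolynomial.aeval_def]
  apply MvPolynomial.eval₂_mem
  · intro j _
    rw [algebraMap_int_eq, eq_intCast]
    exact E.intCast_mem _
  · rintro ⟨j, m⟩
    show (![(x.out).coeff, (w.out).coeff] j) m ∈ E
    have hmem : ∀ (z : TruncatedWittVector p n L), (∀ i, z.coeff i ∈ E) →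
        z.out.coeff m ∈ E := by
      intro z hz
      rw [coeff_out_eq]
      split_ifs with hm
      · exact hz _
      · exact zero_mem E
    fin_cases j
    · exact hmem x hx
    · exact hmem w hw

end Mem

section GenField

variable {n : ℕ} {K Ksep : Type*} [Field K] [CharP K p] [Field Ksep] [Algebra K Ksep]
  [CharP Ksep p]

theorem genField_le (z : TruncatedWittVector p n Ksep) (E : IntermediateField K Ksep)
    (h : ∀ i, z.coeff i ∈ E) : wittGenField p n K Ksep z ≤ E :=
  IntermediateField.adjoin_le_iff.mpr (Set.range_subset_iff.mpr h)

theorem coeff_mem_genField (z : TruncatedWittVector p n Ksep) (i : Fin n) :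
    z.coeff i ∈ wittGenField p n K Ksep z :=
  IntermediateField.subset_adjoin _ _ ⟨i, rfl⟩

theorem coeff_ker_natCast (u : (TruncatedWittVector p n Ksep)ˣ)
    (hqu : wittQ p n Ksep u = 1) (i : Fin n) :
    ∃ m : ℕ, (↑u : TruncatedWittVector p n Ksep).coeff i = (m : Ksep) := by
  have hF := mapFrobenius_eq_of_wittQ_eq_one u hqu
  have hpow : ((↑u : TruncatedWittVector p n Ksep).coeff i) ^ p
      = (↑u : TruncatedWittVector p n Ksep).coeff i := by
    conv_rhs => rw [← hF]
    rw [mapRingHom_coeff, frobenius_def]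
  exact exists_natCast_of_pow_eq hpow

theorem genField_mono (y u : (TruncatedWittVector p n Ksep)ˣ)
    (hu : ∀ i : Fin n, (↑u : TruncatedWittVector p n Ksep).coeff i
      ∈ wittGenField p n K Ksep ↑y) :
    wittGenField p n K Ksep (↑(y * u) : TruncatedWittVector p n Ksep)
      ≤ wittGenField p n K Ksep ↑y := by
  apply genField_le
  intro i
  rw [Units.val_mul]
  exact coeff_mul_mem _ _ _ (fun j => coeff_mem_genField _ j) hu i

theorem genField_eq (a : (TruncatedWittVector p n K)ˣ) (y z : (TruncatedWittVector p n Ksep)ˣ)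
    (hy : wittQ p n Ksep y = wittIncl p n K Ksep a)
    (hz : wittQ p n Ksep z = wittIncl p n K Ksep a) :
    wittGenField p n K Ksep ↑y = wittGenField p n K Ksep ↑z := by
  have key : ∀ y z : (TruncatedWittVector p n Ksep)ˣ,
      wittQ p n Ksep y = wittIncl p n K Ksep a → wittQ p n Ksep z = wittIncl p n K Ksep a →
      wittGenField p n K Ksep ↑z ≤ wittGenField p n K Ksep ↑y := by
    intro y z hy hz
    have hqu : wittQ p n Ksep (y⁻¹ * z) = 1 := by
      rw [map_mul, map_inv, hy, hz, inv_mul_cancel]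
    have hmono := genField_mono y (y⁻¹ * z) (fun i => by
      obtain ⟨m, hm⟩ := coeff_ker_natCast (y⁻¹ * z) hqu i
      rw [hm]
      exact (wittGenField p n K Ksep ↑y).natCast_mem m)
    rwa [mul_inv_cancel_left] at hmono
  exact le_antisymm (key z y hz hy) (key y z hy hz)

end GenField

/-! ### Existence of solutions over a separably closed field -/

section Existence

open WittVector.RecursionMain WittVector.RecursionBase

variable {k : Type*} [Field k] [CharP k p] [IsSepClosed k]

theorem succNthDefiningPoly_separable (m : ℕ) (a₁ a₂ : WittVector p k) (bs : Fin (m + 1) → k)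
    (ha₂ : a₂.coeff 0 ≠ 0) : (succNthDefiningPoly p m a₁ a₂ bs).Separable := by
  have hc : a₂.coeff 0 ^ p ^ (m + 1) ≠ 0 := pow_ne_zero _ ha₂
  have hd : (succNthDefiningPoly p m a₁ a₂ bs).derivative
      = C (-(a₂.coeff 0 ^ p ^ (m + 1))) := by
    simp only [succNthDefiningPoly, derivative_add, derivative_sub, derivative_mul,
      derivative_C, derivative_X, derivative_X_pow, CharP.cast_eq_zero k p, map_zero, zero_mul,
      mul_zero, mul_one, one_mul, add_zero, zero_add, zero_sub, map_neg, neg_inj]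
  rw [Polynomial.Separable, hd]
  exact ⟨0, C (-(a₂.coeff 0 ^ p ^ (m + 1)))⁻¹, by
    rw [zero_mul, zero_add, ← C_mul, inv_mul_cancel₀ (neg_ne_zero.mpr hc), C_1]⟩

theorem sep_root_exists (m : ℕ) (a₁ a₂ : WittVector p k) (bs : Fin (m + 1) → k)
    (ha₁ : a₁.coeff 0 ≠ 0) (ha₂ : a₂.coeff 0 ≠ 0) :
    ∃ b : k, (succNthDefiningPoly p m a₁ a₂ bs).IsRoot b := by
  apply IsSepClosed.exists_root
  · rw [succNthDefiningPoly_degree p m a₁ a₂ bs ha₁ ha₂]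
    exact_mod_cast hp.out.ne_zero
  · exact succNthDefiningPoly_separable m a₁ a₂ bs ha₂

/-- The `m+1`-st coefficient of our solution. -/
def sepSuccNthVal (m : ℕ) (a₁ a₂ : WittVector p k) (bs : Fin (m + 1) → k)
    (ha₁ : a₁.coeff 0 ≠ 0) (ha₂ : a₂.coeff 0 ≠ 0) : k :=
  Classical.choose (sep_root_exists m a₁ a₂ bs ha₁ ha₂)

theorem sepSuccNthVal_spec (m : ℕ) (a₁ a₂ : WittVector p k) (bs : Fin (m + 1) → k)
    (ha₁ : a₁.coeff 0 ≠ 0) (ha₂ : a₂.coeff 0 ≠ 0) :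
    (succNthDefiningPoly p m a₁ a₂ bs).IsRoot (sepSuccNthVal m a₁ a₂ bs ha₁ ha₂) :=
  Classical.choose_spec (sep_root_exists m a₁ a₂ bs ha₁ ha₂)

theorem sepSuccNthVal_spec' (m : ℕ) (a₁ a₂ : WittVector p k) (bs : Fin (m + 1) → k)
    (ha₁ : a₁.coeff 0 ≠ 0) (ha₂ : a₂.coeff 0 ≠ 0) :
    sepSuccNthVal m a₁ a₂ bs ha₁ ha₂ ^ p * a₁.coeff 0 ^ p ^ (m + 1) +
          a₁.coeff (m + 1) * (bs 0 ^ p) ^ p ^ (m + 1) +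
        nthRemainder p m (fun v => bs v ^ p) (truncateFun (m + 1) a₁) =
      sepSuccNthVal m a₁ a₂ bs ha₁ ha₂ * a₂.coeff 0 ^ p ^ (m + 1) +
          a₂.coeff (m + 1) * bs 0 ^ p ^ (m + 1) +
        nthRemainder p m bs (truncateFun (m + 1) a₂) := by
  rw [← sub_eq_zero]
  have h := sepSuccNthVal_spec m a₁ a₂ bs ha₁ ha₂
  simp only [Polynomial.map_add, Polynomial.eval_X, Polynomial.map_pow, Polynomial.eval_C,
    Polynomial.eval_pow, succNthDefiningPoly, Polynomial.eval_mul, Polynomial.eval_add,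
    Polynomial.eval_sub, Polynomial.map_mul, Polynomial.map_sub, Polynomial.IsRoot.def] at h
  convert h using 1
  ring

theorem sep_solution_pow (a₁ a₂ : WittVector p k)
    (ha₁ : a₁.coeff 0 ≠ 0) (ha₂ : a₂.coeff 0 ≠ 0) :
    ∃ x : k, x ^ (p - 1) = a₂.coeff 0 / a₁.coeff 0 := by
  have hq : a₂.coeff 0 / a₁.coeff 0 ≠ 0 := div_ne_zero ha₂ ha₁
  have hp1 : ((p - 1 : ℕ) : k) ≠ 0 := by
    rw [Nat.cast_sub hp.out.one_le, CharP.cast_eq_zero k p, Nat.cast_one, zero_sub]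
    exact neg_ne_zero.mpr one_ne_zero
  obtain ⟨x, hx⟩ := IsSepClosed.exists_root
    (X ^ (p - 1) - C (a₂.coeff 0 / a₁.coeff 0))
    (by
      rw [degree_X_pow_sub_C (by have := hp.out.one_lt; omega : 0 < p - 1)]
      exact_mod_cast (by have := hp.out.one_lt; omega : p - 1 ≠ 0))
    (separable_X_pow_sub_C _ hp1 hq)
  refine ⟨x, ?_⟩
  have hx' : x ^ (p - 1) - a₂.coeff 0 / a₁.coeff 0 = 0 := by
    simpa [Polynomial.IsRoot.def] using hx
  exact sub_eq_zero.mp hx'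

/-- The 0th coefficient of our solution. -/
def sepSolution (a₁ a₂ : WittVector p k) (ha₁ : a₁.coeff 0 ≠ 0) (ha₂ : a₂.coeff 0 ≠ 0) : k :=
  Classical.choose (sep_solution_pow a₁ a₂ ha₁ ha₂)

theorem sepSolution_spec (a₁ a₂ : WittVector p k) (ha₁ : a₁.coeff 0 ≠ 0)
    (ha₂ : a₂.coeff 0 ≠ 0) :
    sepSolution a₁ a₂ ha₁ ha₂ ^ (p - 1) = a₂.coeff 0 / a₁.coeff 0 :=
  Classical.choose_spec (sep_solution_pow a₁ a₂ ha₁ ha₂)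

theorem sepSolution_nonzero (a₁ a₂ : WittVector p k) (ha₁ : a₁.coeff 0 ≠ 0)
    (ha₂ : a₂.coeff 0 ≠ 0) : sepSolution a₁ a₂ ha₁ ha₂ ≠ 0 := by
  intro h
  have hs := sepSolution_spec a₁ a₂ ha₁ ha₂
  rw [h, zero_pow (by have := hp.out.one_lt; omega : p - 1 ≠ 0)] at hs
  exact (div_ne_zero ha₂ ha₁) hs.symm

theorem sepSolution_spec' (a₁ a₂ : WittVector p k) (ha₁ : a₁.coeff 0 ≠ 0)
    (ha₂ : a₂.coeff 0 ≠ 0) :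
    sepSolution a₁ a₂ ha₁ ha₂ ^ p * a₁.coeff 0 = sepSolution a₁ a₂ ha₁ ha₂ * a₂.coeff 0 := by
  have hs := sepSolution_spec a₁ a₂ ha₁ ha₂
  cases' Nat.exists_eq_succ_of_ne_zero hp.out.ne_zero with q hq
  have hq' : q = p - 1 := by simp only [hq, tsub_zero, Nat.succ_sub_succ_eq_sub]
  conv_lhs =>
    congr
    congr
    · skip
    · rw [hq]
  rw [pow_succ', hq', hs]
  field_simp [ha₁, mul_comm]

/-- Recursively defined coefficients of our solution. -/
@[semireducible] noncomputable def sepRotationCoeff {a₁ a₂ : WittVector p k}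
    (ha₁ : a₁.coeff 0 ≠ 0) (ha₂ : a₂.coeff 0 ≠ 0) : ℕ → k
  | 0 => sepSolution a₁ a₂ ha₁ ha₂
  | m + 1 => sepSuccNthVal m a₁ a₂ (fun i => sepRotationCoeff ha₁ ha₂ i.val) ha₁ ha₂

/-- A solution of `frobenius x * a₁ = x * a₂` over a separably closed field. -/
def sepRotation {a₁ a₂ : WittVector p k} (ha₁ : a₁.coeff 0 ≠ 0) (ha₂ : a₂.coeff 0 ≠ 0) :
    WittVector p k :=
  WittVector.mk p (sepRotationCoeff ha₁ ha₂)

theorem sepRotation_coeff_zero {a₁ a₂ : WittVector p k} (ha₁ : a₁.coeff 0 ≠ 0)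
    (ha₂ : a₂.coeff 0 ≠ 0) :
    (sepRotation ha₁ ha₂).coeff 0 = sepSolution a₁ a₂ ha₁ ha₂ := by
  show sepRotationCoeff ha₁ ha₂ 0 = _
  rw [sepRotationCoeff]

theorem frobenius_sepRotation {a₁ a₂ : WittVector p k} (ha₁ : a₁.coeff 0 ≠ 0)
    (ha₂ : a₂.coeff 0 ≠ 0) :
    WittVector.frobenius (sepRotation ha₁ ha₂) * a₁ = sepRotation ha₁ ha₂ * a₂ := by
  ext m
  cases' m with m
  · simp only [WittVector.mul_coeff_zero, WittVector.coeff_frobenius_charP, sepRotation,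
      sepRotationCoeff]
    apply sepSolution_spec' _ _ ha₁ ha₂
  · simp only [nthRemainder_spec, WittVector.coeff_frobenius_charP, sepRotationCoeff,
      sepRotation, WittVector.coeff_mk]
    have h :=
      sepSuccNthVal_spec' m a₁ a₂ (fun i : Fin (m + 1) => sepRotationCoeff ha₁ ha₂ i.val)
        ha₁ ha₂
    simp only [sepRotationCoeff, Fin.val_zero] at h
    convert h using 3
    congr 1
    apply TruncatedWittVector.ext
    intro i
    simp only [WittVector.coeff_truncateFun, WittVector.coeff_frobenius_charP]
    rfl
    rfl

end Existence

section CoeffZero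

variable {n : ℕ} {R : Type*} [CommRing R]

theorem coeff_zero_mul (hn : 0 < n) (x w : TruncatedWittVector p n R) :
    (x * w).coeff ⟨0, hn⟩ = x.coeff ⟨0, hn⟩ * w.coeff ⟨0, hn⟩ := by
  rw [trunc_mul, WittVector.coeff_truncate]
  show (x.out * w.out).coeff 0 = _
  rw [WittVector.mul_coeff_zero]
  show x.out.coeff ((⟨0, hn⟩ : Fin n) : ℕ) * w.out.coeff ((⟨0, hn⟩ : Fin n) : ℕ) = _
  rw [TruncatedWittVector.coeff_out, TruncatedWittVector.coeff_out]

theorem coeff_zero_one (hn : 0 < n) :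
    (1 : TruncatedWittVector p n R).coeff ⟨0, hn⟩ = 1 := by
  show (WittVector.truncateFun n (1 : WittVector p R)).coeff ⟨0, hn⟩ = 1
  rw [WittVector.coeff_truncateFun]
  exact WittVector.one_coeff_zero p R

theorem isUnit_coeff_zero (hn : 0 < n) (u : (TruncatedWittVector p n R)ˣ) :
    IsUnit ((↑u : TruncatedWittVector p n R).coeff ⟨0, hn⟩) := by
  refine IsUnit.of_mul_eq_one ((↑(u⁻¹) : TruncatedWittVector p n R).coeff ⟨0, hn⟩) ?_
  rw [← coeff_zero_mul hn, ← Units.val_mul, mul_inv_cancel]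
  exact coeff_zero_one hn

end CoeffZero

end ASW

/-! ### Main theorem -/

open ASW

/--
For every `a ∈ Wₙ(K)ˣ` there exists `y ∈ Wₙ(Kˢᵉᵖ)ˣ` with `𝔮(y) = a`;
any two such solutions generate the same subfield of `Kˢᵉᵖ`, so the field `K(𝔮⁻¹a)` is
well defined; the extension `K(𝔮⁻¹a)/K` is a finite Galois extension; and if
`a ≡ b mod 𝔮Wₙ(K)ˣ`, then `K(𝔮⁻¹a) = K(𝔮⁻¹b)`.
-/
theorem stmt_1 (p n : ℕ) [Fact p.Prime] (K Ksep : Type*) [Field K] [CharP K p]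
    [Field Ksep] [Algebra K Ksep] [IsSepClosure K Ksep] [CharP Ksep p]
    (a : (TruncatedWittVector p n K)ˣ) :
    (∃ y : (TruncatedWittVector p n Ksep)ˣ,
        wittQ p n Ksep y = wittIncl p n K Ksep a) ∧
    (∀ y z : (TruncatedWittVector p n Ksep)ˣ,
        wittQ p n Ksep y = wittIncl p n K Ksep a →
        wittQ p n Ksep z = wittIncl p n K Ksep a →
          wittGenField p n K Ksep ↑y = wittGenField p n K Ksep ↑z) ∧
    (∀ y : (TruncatedWittVector p n Ksep)ˣ,
        wittQ p n Ksep y = wittIncl p n K Ksep a →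
          FiniteDimensional K ↥(wittGenField p n K Ksep ↑y) ∧
          IsGalois K ↥(wittGenField p n K Ksep ↑y)) ∧
    (∀ b : (TruncatedWittVector p n K)ˣ, (∃ c, a = b * wittQ p n K c) →
        ∀ y z : (TruncatedWittVector p n Ksep)ˣ,
          wittQ p n Ksep y = wittIncl p n K Ksep a →
          wittQ p n Ksep z = wittIncl p n K Ksep b →
            wittGenField p n K Ksep ↑y = wittGenField p n K Ksep ↑z) := by
  haveI : IsSepClosed Ksep := IsSepClosure.sep_closed K
  refine ⟨?_, ?_, ?_, ?_⟩
  · -- existence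
    rcases Nat.eq_zero_or_pos n with hn | hn
    · subst hn
      exact ⟨1, Units.ext (TruncatedWittVector.ext fun i => i.elim0)⟩
    · -- the coefficient `a₀` is nonzero
      have ha0 : ((↑a : TruncatedWittVector p n K).coeff ⟨0, hn⟩) ≠ 0 :=
        (isUnit_coeff_zero hn a).ne_zero
      set A : WittVector p K := (↑a : TruncatedWittVector p n K).out with hA
      set b : WittVector p Ksep := WittVector.map (algebraMap K Ksep) A with hb
      have hb0 : b.coeff 0 ≠ 0 := by
        rw [hb, WittVector.map_coeff, hA]
        rw [show A.coeff 0 = (↑a : TruncatedWittVector p n K).coeff ⟨0, hn⟩ from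
          TruncatedWittVector.coeff_out _ ⟨0, hn⟩]
        intro hcontra
        exact ha0 ((map_eq_zero_iff _ (algebraMap K Ksep).injective).mp hcontra)
      have h10 : (1 : WittVector p Ksep).coeff 0 ≠ 0 := by
        rw [WittVector.one_coeff_zero]; exact one_ne_zero
      set w : WittVector p Ksep := sepRotation h10 hb0 with hw
      have hw0 : w.coeff 0 ≠ 0 := by
        rw [hw, sepRotation_coeff_zero]
        exact sepSolution_nonzero _ _ h10 hb0
      have hweq : WittVector.map (frobenius Ksep p) w = w * b := by
        have h := frobenius_sepRotation h10 hb0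
        rw [mul_one] at h
        rw [← WittVector.frobenius_eq_map_frobenius]
        exact h
      have hwunit : IsUnit w := WittVector.isUnit_of_coeff_zero_ne_zero w hw0
      obtain ⟨W, hW⟩ := hwunit
      refine ⟨Units.map (WittVector.truncate n (p := p)).toMonoidHom W, ?_⟩
      have hkey : Units.map (TruncatedWittVector.mapRingHom p n (frobenius Ksep p)).toMonoidHom
          (Units.map (WittVector.truncate n (p := p)).toMonoidHom W)
          = wittIncl p n K Ksep a * Units.map (WittVector.truncate n (p := p)).toMonoidHom W := by
        apply Units.ext
        rw [Units.val_mul, Units.coe_map, Units.coe_map]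
        show TruncatedWittVector.mapRingHom p n (frobenius Ksep p)
            (WittVector.truncate n (↑W)) = _
        rw [hW, mapRingHom_truncate, hweq, map_mul]
        have hb' : WittVector.truncate n b
            = ((wittIncl p n K Ksep a : (TruncatedWittVector p n Ksep)ˣ)
              : TruncatedWittVector p n Ksep) := by
          rw [hb, ← mapRingHom_truncate, hA, truncate_out']
          rfl
        rw [hb']
        exact mul_comm _ _
      rw [wittQ_apply, hkey, mul_inv_cancel_right]
  · intro y z hy hz
    exact genField_eq a y z hy hz
  · intro y hy
    constructor
    · haveI : Finite (Set.range fun i => (↑y : TruncatedWittVector p n Ksep).coeff i) :=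
        (Set.finite_range _).to_subtype
      exact IntermediateField.finiteDimensional_adjoin
        (fun x _ => Algebra.IsSeparable.isIntegral K x)
    · haveI hsep : Algebra.IsSeparable K ↥(wittGenField p n K Ksep
          (↑y : TruncatedWittVector p n Ksep)) :=
        Algebra.isSeparable_tower_bot_of_isSeparable K _ Ksep
      haveI hnormal : Normal K ↥(wittGenField p n K Ksep
          (↑y : TruncatedWittVector p n Ksep)) := by
        rw [IntermediateField.normal_iff_forall_map_le']
        intro σ
        set f : Ksep →+* Ksep := σ.toAlgHom.toRingHom with hf
        set z : (TruncatedWittVector p n Ksep)ˣ :=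
          Units.map (TruncatedWittVector.mapRingHom p n f).toMonoidHom y with hzdef
        have hfun : (fun i => (↑z : TruncatedWittVector p n Ksep).coeff i)
            = (⇑(↑σ : Ksep →ₐ[K] Ksep) ∘ fun i => (↑y : TruncatedWittVector p n Ksep).coeff i)
            := by
          funext i
          show (↑z : TruncatedWittVector p n Ksep).coeff i
            = σ ((↑y : TruncatedWittVector p n Ksep).coeff i)
          rw [hzdef, Units.coe_map]
          show (TruncatedWittVector.mapRingHom p n f
            (↑y : TruncatedWittVector p n Ksep)).coeff i = _
          rw [mapRingHom_coeff]
          rfl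
        have hmapz : (wittGenField p n K Ksep
            (↑y : TruncatedWittVector p n Ksep)).map ↑σ
            = wittGenField p n K Ksep (↑z : TruncatedWittVector p n Ksep) := by
          rw [wittGenField, wittGenField, IntermediateField.adjoin_map, hfun, Set.range_comp]
        have hz : wittQ p n Ksep z = wittIncl p n K Ksep a := by
          rw [hzdef, wittQ_map, hy]
          apply Units.ext
          rw [Units.coe_map]
          show TruncatedWittVector.mapRingHom p n f
              ((wittIncl p n K Ksep a : _) : TruncatedWittVector p n Ksep) = _
          show TruncatedWittVector.mapRingHom p n f
              (TruncatedWittVector.mapRingHom p n (algebraMap K Ksep)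
                (↑a : TruncatedWittVector p n K)) = _
          rw [mapRingHom_comp_apply]
          have hcompeq : f.comp (algebraMap K Ksep) = algebraMap K Ksep := by
            ext r
            exact σ.commutes r
          rw [hcompeq]
          rfl
        have := genField_eq a y z hy hz
        calc (wittGenField p n K Ksep (↑y : TruncatedWittVector p n Ksep)).map ↑σ
            = wittGenField p n K Ksep (↑z : TruncatedWittVector p n Ksep) := hmapz
          _ = wittGenField p n K Ksep (↑y : TruncatedWittVector p n Ksep) := this.symm
          _ ≤ _ := le_rfl
      exact ⟨⟩
  · rintro b ⟨c, hc⟩ y z hy hz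
    -- z * wittIncl c is a solution for a
    set z' : (TruncatedWittVector p n Ksep)ˣ := z * wittIncl p n K Ksep c with hz'def
    have hz' : wittQ p n Ksep z' = wittIncl p n K Ksep a := by
      rw [hz'def, map_mul, hz]
      have hqincl : wittQ p n Ksep (wittIncl p n K Ksep c)
          = wittIncl p n K Ksep (wittQ p n K c) := wittQ_map (algebraMap K Ksep) c
      rw [hqincl, ← map_mul, ← hc]
    have h1 : wittGenField p n K Ksep (↑y : TruncatedWittVector p n Ksep)
        = wittGenField p n K Ksep (↑z' : TruncatedWittVector p n Ksep) :=
      genField_eq a y z' hy hz'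
    have hinclmem : ∀ (d : (TruncatedWittVector p n K)ˣ) (E : IntermediateField K Ksep)
        (i : Fin n), ((wittIncl p n K Ksep d : _) : TruncatedWittVector p n Ksep).coeff i ∈ E := by
      intro d E i
      show (TruncatedWittVector.mapRingHom p n (algebraMap K Ksep)
        (↑d : TruncatedWittVector p n K)).coeff i ∈ E
      rw [mapRingHom_coeff]
      exact E.algebraMap_mem _
    have h2 : wittGenField p n K Ksep (↑z' : TruncatedWittVector p n Ksep)
        = wittGenField p n K Ksep (↑z : TruncatedWittVector p n Ksep) := by
      apply le_antisymm
      · rw [hz'def]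
        exact genField_mono z (wittIncl p n K Ksep c) (fun i => hinclmem c _ i)
      · have : z = z' * (wittIncl p n K Ksep c)⁻¹ := by
          rw [hz'def, mul_inv_cancel_right]
        rw [this, ← map_inv]
        exact genField_mono z' (wittIncl p n K Ksep (c⁻¹)) (fun i => hinclmem c⁻¹ _ i)
    rw [h1, h2]
end
end

section
/- Let a ∈ W_n(K)^× and fix y ∈ W_n(K^sep)^× with 𝔮(y) = a. The map Gal(K(𝔮^{-1}a)/K) → W_n(F_p)^× sending g to g(y)·y^{-1} is a well-defined injective group homomorphism that does not depend on the choice of y. In particular, Gal(K(𝔮^{-1}a)/K) is abelian and isomorphic to a subgroup of (ℤ/p^nℤ)^×, since W_n(F_p) ≅ ℤ/p^nℤ as rings. -/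
noncomputable section

open WittVector

namespace StmtAux

variable (p n : ℕ) [Fact p.Prime]

theorem mapRingHom_coeff {R S : Type*} [CommRing R] [CommRing S] (f : R →+* S)
    (x : TruncatedWittVector p n R) (i : Fin n) :
    (TruncatedWittVector.mapRingHom p n f x).coeff i = f (x.coeff i) := by
  have hx : WittVector.truncate n x.out = x := x.truncateFun_out
  conv_lhs => rw [← hx]
  erw [TruncatedWittVector.mapRingHom, RingHom.liftOfRightInverse_comp_apply,
    RingHom.comp_apply, WittVector.coeff_truncate, WittVector.map_coeff]
  congr 1
  conv_rhs => rw [← hx]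
  rw [WittVector.coeff_truncate]

theorem mapRingHom_comp_apply {R S T : Type*} [CommRing R] [CommRing S] [CommRing T]
    (f : R →+* S) (g : S →+* T) (x : TruncatedWittVector p n R) :
    TruncatedWittVector.mapRingHom p n g (TruncatedWittVector.mapRingHom p n f x)
      = TruncatedWittVector.mapRingHom p n (g.comp f) x :=
  TruncatedWittVector.ext fun i => by simp [mapRingHom_coeff]

theorem mapRingHom_injective {R S : Type*} [CommRing R] [CommRing S]
    {f : R →+* S} (hf : Function.Injective f) :
    Function.Injective (TruncatedWittVector.mapRingHom p n f) := by
  intro x y h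
  refine TruncatedWittVector.ext fun i => hf ?_
  rw [← mapRingHom_coeff, ← mapRingHom_coeff, h]

theorem exists_zmod (Ksep : Type*) [Field Ksep] [CharP Ksep p] (c : Ksep)
    (hc : c ^ p = c) : ∃ z : ZMod p, ZMod.castHom (dvd_refl p) Ksep z = c := by
  classical
  set φ := ZMod.castHom (dvd_refl p) Ksep with hφdef
  have hφ : Function.Injective φ := φ.injective
  have hp1 : 1 < p := (Fact.out : p.Prime).one_lt
  set q : Polynomial Ksep := Polynomial.X ^ p - Polynomial.X with hq
  have hq0 : q ≠ 0 := by
    intro h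
    have h1 : q.coeff p = 0 := by rw [h]; simp
    rw [hq] at h1
    simp only [Polynomial.coeff_sub, Polynomial.coeff_X_pow, Polynomial.coeff_X,
      if_pos rfl, if_neg hp1.ne] at h1
    simp at h1
  have hdeg : q.natDegree ≤ p := by
    refine le_trans (Polynomial.natDegree_sub_le _ _) ?_
    simp [Polynomial.natDegree_X_pow, hp1.le]
  have hroot : ∀ z : ZMod p, φ z ∈ q.roots.toFinset := by
    intro z
    rw [Multiset.mem_toFinset, Polynomial.mem_roots hq0]
    simp only [hq, Polynomial.IsRoot.def, Polynomial.eval_sub, Polynomial.eval_pow,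
      Polynomial.eval_X]
    rw [← map_pow, ZMod.pow_card, sub_self]
  have hcS : c ∈ q.roots.toFinset := by
    rw [Multiset.mem_toFinset, Polynomial.mem_roots hq0]
    simp only [hq, Polynomial.IsRoot.def, Polynomial.eval_sub, Polynomial.eval_pow,
      Polynomial.eval_X, hc, sub_self]
  have hsub : Finset.image φ Finset.univ ⊆ q.roots.toFinset := by
    intro x hx
    obtain ⟨z, _, rfl⟩ := Finset.mem_image.mp hx
    exact hroot z
  have hcard : q.roots.toFinset.card ≤ (Finset.image φ Finset.univ).card := by
    rw [Finset.card_image_of_injective _ hφ]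
    simp only [Finset.card_univ, ZMod.card]
    exact le_trans (Multiset.toFinset_card_le _) (le_trans (Polynomial.card_roots' q) hdeg)
  have := Finset.eq_of_subset_of_card_le hsub hcard
  rw [← this] at hcS
  obtain ⟨z, _, hz⟩ := Finset.mem_image.mp hcS
  exact ⟨z, hz⟩

variable (Ksep : Type*) [Field Ksep] [CharP Ksep p]

theorem exists_truncated (x : TruncatedWittVector p n Ksep)
    (hx : TruncatedWittVector.mapRingHom p n (frobenius Ksep p) x = x) :
    ∃ w : TruncatedWittVector p n (ZMod p),
      TruncatedWittVector.mapRingHom p n (ZMod.castHom (dvd_refl p) Ksep) w = x := by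
  classical
  choose z hz using fun i : Fin n =>
    exists_zmod p Ksep (x.coeff i) (by
      have := congrArg (fun v : TruncatedWittVector p n Ksep => v.coeff i) hx
      simpa [mapRingHom_coeff, frobenius_def] using this)
  exact ⟨TruncatedWittVector.mk p z,
    TruncatedWittVector.ext fun i => by simp [mapRingHom_coeff, hz]⟩

theorem exists_unit (u : (TruncatedWittVector p n Ksep)ˣ)
    (hu : TruncatedWittVector.mapRingHom p n (frobenius Ksep p) ↑u = ↑u) :
    ∃ w : (TruncatedWittVector p n (ZMod p))ˣ,
      Units.map (TruncatedWittVector.mapRingHom p n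
        (ZMod.castHom (dvd_refl p) Ksep)).toMonoidHom w = u := by
  have hu' : TruncatedWittVector.mapRingHom p n (frobenius Ksep p) ↑u⁻¹ = ↑u⁻¹ := by
    have h1 : (u : TruncatedWittVector p n Ksep) *
        TruncatedWittVector.mapRingHom p n (frobenius Ksep p) ↑u⁻¹ = 1 := by
      rw [← hu, ← map_mul]
      simp
    exact (Units.inv_eq_of_mul_eq_one_right h1).symm
  obtain ⟨w, hw⟩ := exists_truncated p n Ksep ↑u hu
  obtain ⟨w', hw'⟩ := exists_truncated p n Ksep ↑u⁻¹ hu'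
  have hinj : Function.Injective
      (TruncatedWittVector.mapRingHom p n (ZMod.castHom (dvd_refl p) Ksep)) :=
    mapRingHom_injective p n (ZMod.castHom (dvd_refl p) Ksep).injective
  have hww' : w * w' = 1 := by
    apply hinj
    rw [map_mul, hw, hw', map_one]
    simp
  refine ⟨Units.mkOfMulEqOne w w' hww', Units.ext ?_⟩
  simpa using hw

end StmtAux

/--
Let `a ∈ Wₙ(K)ˣ` and fix `y ∈ Wₙ(Kˢᵉᵖ)ˣ` with `𝔮(y) = a`. The map
`Gal(K(𝔮⁻¹a)/K) → Wₙ(𝔽_p)ˣ` sending `g` to `g(y)·y⁻¹` is a well-defined injective group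
homomorphism that does not depend on the choice of `y`.  In particular `Gal(K(𝔮⁻¹a)/K)`
is abelian and isomorphic to a subgroup of `(ℤ/pⁿℤ)ˣ`.  (Elements of the Galois group of
`L = K(𝔮⁻¹a)` over `K` are treated via automorphisms of `Kˢᵉᵖ` restricted to `L`; the
third clause says the map depends only on, and is injective in, the restriction to `L`.)
-/
theorem stmt_2 (p n : ℕ) [Fact p.Prime] (K Ksep : Type*) [Field K] [CharP K p]
    [Field Ksep] [Algebra K Ksep] [IsSepClosure K Ksep] [CharP Ksep p]
    (a : (TruncatedWittVector p n K)ˣ) (y : (TruncatedWittVector p n Ksep)ˣ)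
    (hy : wittQ p n Ksep y = wittIncl p n K Ksep a) :
    let L := wittGenField p n K Ksep ↑y
    let Φ : (Ksep ≃ₐ[K] Ksep) → (TruncatedWittVector p n Ksep)ˣ := fun g =>
      Units.map (TruncatedWittVector.mapRingHom p n
        (RingHomClass.toRingHom g)).toMonoidHom y * y⁻¹
    -- well-defined: the values lie in (the image of) Wₙ(𝔽_p)ˣ
    (∀ g, ∃ w : (TruncatedWittVector p n (ZMod p))ˣ,
        Units.map (TruncatedWittVector.mapRingHom p n
          (ZMod.castHom (dvd_refl p) Ksep)).toMonoidHom w = Φ g) ∧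
    -- it is a group homomorphism
    (∀ g h, Φ (g * h) = Φ g * Φ h) ∧
    -- it depends only on the restriction to L, and is injective in that restriction
    (∀ g h : Ksep ≃ₐ[K] Ksep, Φ g = Φ h ↔ ∀ z : ↥L, g ↑z = h ↑z) ∧
    -- every K-automorphism of L arises by restriction, so Φ is defined on all of Gal(L/K)
    (∀ τ : ↥L ≃ₐ[K] ↥L, ∃ g : Ksep ≃ₐ[K] Ksep, ∀ z : ↥L, g ↑z = ↑(τ z)) ∧
    -- it does not depend on the choice of the solution y
    (∀ y' : (TruncatedWittVector p n Ksep)ˣ,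
        wittQ p n Ksep y' = wittIncl p n K Ksep a →
        ∀ g : Ksep ≃ₐ[K] Ksep,
          Units.map (TruncatedWittVector.mapRingHom p n
            (RingHomClass.toRingHom g)).toMonoidHom y' * y'⁻¹ = Φ g) ∧
    -- Gal(L/K) is abelian and embeds into (ℤ/pⁿℤ)ˣ ≅ Wₙ(𝔽_p)ˣ
    (∀ σ τ : ↥L ≃ₐ[K] ↥L, σ * τ = τ * σ) ∧
    (∃ ψ : (↥L ≃ₐ[K] ↥L) →* (ZMod (p ^ n))ˣ, Function.Injective ψ) := by
  classical
  intro L Φ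
  let M : (Ksep ≃ₐ[K] Ksep) → (TruncatedWittVector p n Ksep)ˣ →* (TruncatedWittVector p n Ksep)ˣ :=
    fun g => Units.map (TruncatedWittVector.mapRingHom p n (RingHomClass.toRingHom g)).toMonoidHom
  let ι : (TruncatedWittVector p n (ZMod p))ˣ →* (TruncatedWittVector p n Ksep)ˣ :=
    Units.map (TruncatedWittVector.mapRingHom p n (ZMod.castHom (dvd_refl p) Ksep)).toMonoidHom
  let Fu : (TruncatedWittVector p n Ksep)ˣ →* (TruncatedWittVector p n Ksep)ˣ :=
    Units.map (TruncatedWittVector.mapRingHom p n (frobenius Ksep p)).toMonoidHom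
  have hΦM : ∀ g, Φ g = M g y * y⁻¹ := fun _ => rfl
  have hq : ∀ u : (TruncatedWittVector p n Ksep)ˣ, wittQ p n Ksep u = Fu u * u⁻¹ := by
    intro u
    show (Units.map (TruncatedWittVector.mapRingHom p n (frobenius Ksep p)).toMonoidHom /
      MonoidHom.id ((TruncatedWittVector p n Ksep)ˣ)) u = Fu u * u⁻¹
    rw [MonoidHom.div_apply, div_eq_mul_inv]
    rfl
  have hιinj : Function.Injective ι := by
    intro w w' h
    refine Units.ext (StmtAux.mapRingHom_injective p n
      (ZMod.castHom (dvd_refl p) Ksep).injective ?_)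
    have := congrArg Units.val h
    simpa [ι, Units.coe_map] using this
  have hMι : ∀ (g : Ksep ≃ₐ[K] Ksep) (w), M g (ι w) = ι w := by
    intro g w
    refine Units.ext ?_
    have hcomp : (RingHomClass.toRingHom g).comp (ZMod.castHom (dvd_refl p) Ksep)
        = ZMod.castHom (dvd_refl p) Ksep := RingHom.ext_zmod _ _
    show TruncatedWittVector.mapRingHom p n (RingHomClass.toRingHom g)
        (TruncatedWittVector.mapRingHom p n (ZMod.castHom (dvd_refl p) Ksep) ↑w)
      = TruncatedWittVector.mapRingHom p n (ZMod.castHom (dvd_refl p) Ksep) ↑w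
    rw [StmtAux.mapRingHom_comp_apply, hcomp]
  have hFM : ∀ (g : Ksep ≃ₐ[K] Ksep) (u), Fu (M g u) = M g (Fu u) := by
    intro g u
    refine Units.ext ?_
    show TruncatedWittVector.mapRingHom p n (frobenius Ksep p)
        (TruncatedWittVector.mapRingHom p n (RingHomClass.toRingHom g) ↑u)
      = TruncatedWittVector.mapRingHom p n (RingHomClass.toRingHom g)
        (TruncatedWittVector.mapRingHom p n (frobenius Ksep p) ↑u)
    refine TruncatedWittVector.ext fun i => ?_
    simp [StmtAux.mapRingHom_coeff, frobenius_def, map_pow]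
  have hMA : ∀ g : Ksep ≃ₐ[K] Ksep, M g (wittIncl p n K Ksep a) = wittIncl p n K Ksep a := by
    intro g
    refine Units.ext ?_
    show TruncatedWittVector.mapRingHom p n (RingHomClass.toRingHom g)
        (TruncatedWittVector.mapRingHom p n (algebraMap K Ksep) ↑a)
      = TruncatedWittVector.mapRingHom p n (algebraMap K Ksep) ↑a
    refine TruncatedWittVector.ext fun i => ?_
    simp [StmtAux.mapRingHom_coeff, AlgEquiv.commutes]
  have hqΦ : ∀ g, wittQ p n Ksep (Φ g) = 1 := by
    intro g
    have h1 : wittQ p n Ksep (M g y) = M g (wittIncl p n K Ksep a) := by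
      rw [hq, hFM, ← map_inv, ← map_mul, ← hq, hy]
    rw [hΦM g, map_mul, map_inv, h1, hy, hMA]
    simp
  have hkey : ∀ u : (TruncatedWittVector p n Ksep)ˣ, wittQ p n Ksep u = 1 →
      ∃ w, ι w = u := by
    intro u hu
    have hFu : Fu u = u := by
      rw [hq] at hu
      exact mul_inv_eq_one.mp hu
    obtain ⟨w, hw⟩ := StmtAux.exists_unit p n Ksep u (by
      have := congrArg Units.val hFu
      simpa [Fu, Units.coe_map] using this)
    exact ⟨w, hw⟩
  have hMmul : ∀ (g h : Ksep ≃ₐ[K] Ksep) (u), M (g * h) u = M g (M h u) := by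
    intro g h u
    refine Units.ext ?_
    show TruncatedWittVector.mapRingHom p n (RingHomClass.toRingHom (g * h)) ↑u
      = TruncatedWittVector.mapRingHom p n (RingHomClass.toRingHom g)
          (TruncatedWittVector.mapRingHom p n (RingHomClass.toRingHom h) ↑u)
    refine TruncatedWittVector.ext fun i => ?_
    simp [StmtAux.mapRingHom_coeff, AlgEquiv.mul_apply]
  have hΦmul : ∀ g h, Φ (g * h) = Φ g * Φ h := by
    intro g h
    obtain ⟨w, hw⟩ := hkey (Φ h) (hqΦ h)
    have h2 : M g (Φ h) = Φ h := by rw [← hw]; exact hMι g w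
    have h3 : M h y = Φ h * y := by rw [hΦM h, inv_mul_cancel_right]
    calc Φ (g * h) = M g (M h y) * y⁻¹ := by rw [hΦM (g * h), hMmul]
    _ = M g (Φ h * y) * y⁻¹ := by rw [← h3]
    _ = Φ h * (M g y * y⁻¹) := by rw [map_mul, h2, mul_assoc]
    _ = Φ g * Φ h := by rw [← hΦM g, mul_comm]
  have hcoeffL : ∀ i : Fin n, ((y : TruncatedWittVector p n Ksep).coeff i) ∈ L :=
    fun i => IntermediateField.subset_adjoin K _ ⟨i, rfl⟩
  haveI halg : Algebra.IsAlgebraic K Ksep := IsSepClosure.separable.isAlgebraic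
  have hrestr : ∀ g h : Ksep ≃ₐ[K] Ksep, Φ g = Φ h ↔ ∀ z : L, g ↑z = h ↑z := by
    intro g h
    constructor
    · intro hgh z
      have hMy : M g y = M h y := by
        have h' : M g y * y⁻¹ = M h y * y⁻¹ := by rw [← hΦM g, ← hΦM h, hgh]
        exact mul_right_cancel h'
      have hco : ∀ i : Fin n, g ((y : TruncatedWittVector p n Ksep).coeff i)
          = h ((y : TruncatedWittVector p n Ksep).coeff i) := by
        intro i
        have hco' := congrArg (fun u : (TruncatedWittVector p n Ksep)ˣ =>
          (u : TruncatedWittVector p n Ksep).coeff i) hMy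
        simpa [M, Units.coe_map, StmtAux.mapRingHom_coeff] using hco'
      have hz : (z : Ksep) ∈ Algebra.adjoin K
          (Set.range fun i => (y : TruncatedWittVector p n Ksep).coeff i) := by
        have h1 := IntermediateField.adjoin_toSubalgebra_of_isAlgebraic
          (F := K) (E := Ksep)
          (S := Set.range fun i => (y : TruncatedWittVector p n Ksep).coeff i)
          (fun x _ => Algebra.IsAlgebraic.isAlgebraic x)
        have h2 : (z : Ksep) ∈ (IntermediateField.adjoin K
            (Set.range fun i => (y : TruncatedWittVector p n Ksep).coeff i)).toSubalgebra :=
          (IntermediateField.mem_toSubalgebra _ _).mpr z.2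
        rwa [h1] at h2
      have hle : Algebra.adjoin K
          (Set.range fun i => (y : TruncatedWittVector p n Ksep).coeff i)
          ≤ AlgHom.equalizer (g : Ksep →ₐ[K] Ksep) (h : Ksep →ₐ[K] Ksep) := by
        apply Algebra.adjoin_le
        rintro x ⟨i, rfl⟩
        exact hco i
      exact hle hz
    · intro hzeq
      rw [hΦM g, hΦM h]
      congr 1
      refine Units.ext ?_
      show TruncatedWittVector.mapRingHom p n (RingHomClass.toRingHom g) ↑y
        = TruncatedWittVector.mapRingHom p n (RingHomClass.toRingHom h) ↑y
      refine TruncatedWittVector.ext fun i => ?_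
      rw [StmtAux.mapRingHom_coeff, StmtAux.mapRingHom_coeff]
      exact hzeq ⟨_, hcoeffL i⟩
  haveI hnormal : Normal K Ksep := IsGalois.to_normal
  have hlift : ∀ τ : ↥L ≃ₐ[K] ↥L, ∃ g : Ksep ≃ₐ[K] Ksep, ∀ z : ↥L, g ↑z = ↑(τ z) := by
    intro τ
    refine ⟨AlgEquiv.liftNormal τ Ksep, fun z => ?_⟩
    have := AlgEquiv.liftNormal_commutes τ Ksep z
    simpa using this
  have hindep : ∀ y' : (TruncatedWittVector p n Ksep)ˣ,
      wittQ p n Ksep y' = wittIncl p n K Ksep a →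
      ∀ g : Ksep ≃ₐ[K] Ksep, M g y' * y'⁻¹ = Φ g := by
    intro y' hy' g
    have h1 : wittQ p n Ksep (y' * y⁻¹) = 1 := by
      rw [map_mul, map_inv, hy', hy]
      simp
    obtain ⟨w, hw⟩ := hkey _ h1
    have h2 : y' = ι w * y := by rw [hw]; simp
    rw [h2, map_mul, hMι, hΦM g, mul_inv]
    rw [mul_comm (ι w) (M g y), mul_assoc, ← mul_assoc (ι w)]
    simp
  have habelian : ∀ σ τ : ↥L ≃ₐ[K] ↥L, σ * τ = τ * σ := by
    intro σ τ
    obtain ⟨g, hg⟩ := hlift σ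
    obtain ⟨h, hh⟩ := hlift τ
    have hcomm1 : ∀ z : ↥L, (g * h) ↑z = (h * g) ↑z := by
      have hΦc : Φ (g * h) = Φ (h * g) := by rw [hΦmul, hΦmul, mul_comm]
      exact (hrestr (g * h) (h * g)).mp hΦc
    refine AlgEquiv.ext fun z => Subtype.ext ?_
    have h1 : (g * h) ((z : Ksep)) = ↑((σ * τ) z) := by
      rw [AlgEquiv.mul_apply, hh z, hg (τ z)]; rfl
    have h2 : (h * g) ((z : Ksep)) = ↑((τ * σ) z) := by
      rw [AlgEquiv.mul_apply, hg z, hh (σ z)]; rfl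
    rw [show (((σ * τ) z : ↥L) : Ksep) = (g * h) ((z : Ksep)) from h1.symm,
      show (((τ * σ) z : ↥L) : Ksep) = (h * g) ((z : Ksep)) from h2.symm]
    exact hcomm1 z
  refine ⟨fun g => hkey (Φ g) (hqΦ g), hΦmul, hrestr, hlift, hindep, habelian, ?_⟩
  choose glift hglift using hlift
  choose w hw using fun τ : ↥L ≃ₐ[K] ↥L => hkey (Φ (glift τ)) (hqΦ (glift τ))
  let e : (ZMod (p ^ n))ˣ ≃* (TruncatedWittVector p n (ZMod p))ˣ :=
    Units.mapEquiv (TruncatedWittVector.zmodEquivTrunc p n).toMulEquiv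
  have hwmul : ∀ σ τ : ↥L ≃ₐ[K] ↥L, w (σ * τ) = w σ * w τ := by
    intro σ τ
    apply hιinj
    rw [map_mul, hw, hw, hw, ← hΦmul]
    apply (hrestr _ _).mpr
    intro z
    simp [AlgEquiv.mul_apply, hglift]
  refine ⟨MonoidHom.mk' (fun τ => e.symm (w τ)) (fun σ τ => by
    show e.symm (w (σ * τ)) = e.symm (w σ) * e.symm (w τ)
    rw [hwmul, map_mul]), ?_⟩
  intro σ τ hστ
  have hwe : w σ = w τ := e.symm.injective hστ
  have hΦeq : Φ (glift σ) = Φ (glift τ) := by rw [← hw σ, ← hw τ, hwe]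
  have hzs := (hrestr _ _).mp hΦeq
  refine AlgEquiv.ext fun z => Subtype.ext ?_
  rw [show ((σ z : ↥L) : Ksep) = glift σ ((z : Ksep)) from (hglift σ z).symm,
    show ((τ z : ↥L) : Ksep) = glift τ ((z : Ksep)) from (hglift τ z).symm]
  exact hzs z
end
end

section
/- Assume p > 2. Let 1 ≤ r ≤ n−2 and let a = (a_0, 0, ..., 0, a_r, a_{r+1}, ..., a_{n-1}) ∈ W_n(K)^× with a_0 ≠ 0, with components indexed 1 through r−1 equal to 0, and with a_r ≠ 0. Then the truncation of the Witt vector a^p to length r+2 equals (a_0^p, 0, ..., 0, a'_{r+1}) for some a'_{r+1} ∈ K with a'_{r+1} ≠ 0; in particular, the component of a^p in position r vanishes while the component in position r+1 is nonzero. -/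
noncomputable section

open WittVector

namespace Stmt3Aux

open WittVector Function


variable {p : ℕ} [hp : Fact p.Prime] {K : Type*} [CommRing K]

lemma iter_ver_coeff_lt (z : WittVector p K) {m i : ℕ} (h : i < m) :
    (verschiebung^[m] z).coeff i = 0 := by
  induction m generalizing i z with
  | zero => omega
  | succ m ih =>
    rw [iterate_succ_apply']
    cases i with
    | zero => exact verschiebung_coeff_zero _
    | succ i => rw [verschiebung_coeff_succ]; exact ih _ (by omega)

lemma exists_iter_ver (y : WittVector p K) (m : ℕ) (h : ∀ i < m, y.coeff i = 0) :
    ∃ z : WittVector p K, verschiebung^[m] z = y := by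
  refine ⟨WittVector.mk p (fun i => y.coeff (i + m)), ?_⟩
  ext i
  rcases lt_or_ge i m with hi | hi
  · rw [iter_ver_coeff_lt _ hi, h i hi]
  · obtain ⟨k, rfl⟩ : ∃ k, i = k + m := ⟨i - m, by omega⟩
    rw [iterate_verschiebung_coeff]
    rfl

lemma frobenius_iter_ver [CharP K p] (z : WittVector p K) (m : ℕ) :
    frobenius (verschiebung^[m] z) = verschiebung^[m] (frobenius z) := by
  induction m with
  | zero => rfl
  | succ m ih =>
    rw [iterate_succ_apply', ← verschiebung_frobenius_comm, ih, iterate_succ_apply']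

/-- multiplication by `p` increases the vanishing order by one (char p). -/
lemma mul_p_coeff_vanish [CharP K p] (g : WittVector p K) {m : ℕ}
    (hg : ∀ i < m, g.coeff i = 0) : ∀ i < m + 1, (g * (p : WittVector p K)).coeff i = 0 := by
  intro i hi
  rw [← verschiebung_frobenius]
  cases i with
  | zero => exact verschiebung_coeff_zero _
  | succ i =>
    rw [verschiebung_coeff_succ, coeff_frobenius_charP, hg i (by omega),
      zero_pow hp.out.ne_zero]

section Key
variable {L : Type*} [Field L] [CharP L p]

theorem key_lemma (hp2 : 2 < p) (x : WittVector p L) (r : ℕ) (hr : 1 ≤ r)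
    (hx0 : x.coeff 0 ≠ 0) (hmid : ∀ i, 1 ≤ i → i < r → x.coeff i = 0)
    (hxr : x.coeff r ≠ 0) :
    (x ^ p).coeff 0 = x.coeff 0 ^ p ∧ (∀ m, 1 ≤ m → m ≤ r → (x ^ p).coeff m = 0) ∧
      (x ^ p).coeff (r + 1) ≠ 0 := by
  set T : WittVector p L := teichmuller p (x.coeff 0) with hT
  -- decomposition x = T + V^[r] z
  have hsubcoeff : ∀ i < r, (x - T).coeff i = 0 := by
    intro i hi
    have : truncate (p := p) (R := L) r x = truncate r T := by
      ext ⟨j, hj⟩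
      rw [coeff_truncate, coeff_truncate]
      rcases Nat.eq_zero_or_pos j with h0 | h0
      · subst h0; simp [hT, teichmuller_coeff_zero]
      · rw [hmid j h0 hj, teichmuller_coeff_pos _ _ j h0]
    have hker : x - T ∈ RingHom.ker (truncate (p := p) (R := L) r) := by
      rw [RingHom.mem_ker, map_sub, this, sub_self]
    exact (mem_ker_truncate _ _).mp hker i hi
  obtain ⟨z, hz⟩ := exists_iter_ver (x - T) r hsubcoeff
  have hx : x = T + verschiebung^[r] z := by rw [hz]; ring
  have hz0 : z.coeff 0 ≠ 0 := by
    intro h0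
    have hvan : ∀ i < r + 1, (x - T).coeff i = 0 := by
      intro i hi
      rcases lt_or_ge i r with h | h
      · exact hsubcoeff i h
      · have hir : i = r := by omega
        have hc := iterate_verschiebung_coeff (R := L) z r 0
        rw [zero_add] at hc
        rw [hir, ← hz, hc, h0]
    have : truncate (p := p) (R := L) (r+1) x = truncate (r+1) T := by
      have hker : x - T ∈ RingHom.ker (truncate (p := p) (R := L) (r+1)) :=
        (mem_ker_truncate _ _).mpr hvan
      rw [RingHom.mem_ker, map_sub, sub_eq_zero] at hker
      exact hker
    have hxrT : x.coeff r = T.coeff r := by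
      have := congrArg (fun v => TruncatedWittVector.coeff ⟨r, by omega⟩ v) this
      simpa only [coeff_truncate] using this
    rw [hxrT, teichmuller_coeff_pos _ _ r (by omega)] at hxr
    exact hxr rfl
  -- the expansion of x^p
  set w : WittVector p L := verschiebung^[r] z with hw
  have hww : w * w = verschiebung^[r + r] (frobenius^[r] z * frobenius^[r] z) :=
    iterate_verschiebung_mul z z r r
  have hw2 : ∀ i < r + 1, (w ^ 2).coeff i = 0 := by
    intro i hi
    rw [sq, hww]
    exact iter_ver_coeff_lt _ (by omega)
  have hw3 : ∀ i < r + 2, (w ^ 2 * w).coeff i = 0 := by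
    intro i hi
    rw [sq, hww, hw, iterate_verschiebung_mul]
    exact iter_ver_coeff_lt _ (by omega)
  set krn2 : Ideal (WittVector p L) := RingHom.ker (truncate (p := p) (R := L) (r + 2))
    with hkrn2
  set E : WittVector p L :=
    ∑ k ∈ Finset.range (p - 1), T ^ k * w ^ (p - k) * (Nat.choose p k : WittVector p L)
    with hE
  have hEmem : E ∈ krn2 := by
    rw [hE]
    apply Ideal.sum_mem
    intro k hk
    have hk' : k < p - 1 := Finset.mem_range.mp hk
    rcases Nat.eq_zero_or_pos k with rfl | hkpos
    · -- term w ^ p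
      have hwp : w ^ (p - 0) = w ^ (p - 3) * (w ^ 2 * w) := by
        rw [← pow_succ, ← pow_add]
        congr 1
        omega
      rw [hwp]
      have hmem : w ^ 2 * w ∈ krn2 := (mem_ker_truncate _ _).mpr hw3
      exact Ideal.mul_mem_right _ _ (Ideal.mul_mem_left _ _ (Ideal.mul_mem_left _ _ hmem))
    · -- term divisible by p
      obtain ⟨c, hc⟩ : p ∣ Nat.choose p k :=
        hp.out.dvd_choose_self (by omega) (by omega)
      have hsplit : w ^ (p - k) = w ^ (p - k - 2) * w ^ 2 := by
        rw [← pow_add]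
        congr 1
        omega
      have hgmem : T ^ k * (w ^ (p - k - 2) * w ^ 2) * (c : WittVector p L) ∈
          RingHom.ker (truncate (p := p) (R := L) (r + 1)) := by
        have hmem : w ^ 2 ∈ RingHom.ker (truncate (p := p) (R := L) (r + 1)) :=
          (mem_ker_truncate _ _).mpr hw2
        exact Ideal.mul_mem_right _ _ (Ideal.mul_mem_left _ _
          (Ideal.mul_mem_left _ _ hmem))
      have hgv := (mem_ker_truncate _ _).mp hgmem
      have hpv := mul_p_coeff_vanish _ hgv
      have heq : T ^ k * w ^ (p - k) * (Nat.choose p k : WittVector p L) =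
          T ^ k * (w ^ (p - k - 2) * w ^ 2) * (c : WittVector p L) * (p : WittVector p L) := by
        rw [← hsplit, hc]
        push_cast
        ring
      rw [heq, hkrn2]
      exact (mem_ker_truncate _ _).mpr hpv
  -- the full expansion
  have hexp : x ^ p = E + T ^ (p - 1) * w * (p : WittVector p L) + T ^ p := by
    have h1 : p + 1 = (p - 1) + 1 + 1 := by omega
    have h2 : p - 1 + 1 = p := by omega
    rw [hx, add_pow, h1, Finset.sum_range_succ, Finset.sum_range_succ, h2, Nat.sub_self,
      Nat.choose_self, pow_zero, Nat.cast_one, mul_one, mul_one]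
    have h3 : p - (p - 1) = 1 := by omega
    have h4 : Nat.choose p (p - 1) = p := by
      have hs := Nat.choose_symm (show 1 ≤ p by omega)
      rw [hs, Nat.choose_one_right]
    rw [h3, pow_one, h4]
  -- the main term
  set M : WittVector p L := T ^ (p - 1) * w * (p : WittVector p L) with hMdef
  have hM : M = verschiebung^[r + 1] (frobenius (frobenius^[r] (T ^ (p - 1)) * z)) := by
    have step1 : T ^ (p - 1) * w = verschiebung^[r] (frobenius^[r] (T ^ (p - 1)) * z) := by
      have := iterate_verschiebung_mul (T ^ (p - 1)) z 0 r
      simpa using this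
    rw [hMdef, step1, ← verschiebung_frobenius, frobenius_iter_ver, iterate_succ_apply']
  have hMvan : ∀ i < r + 1, M.coeff i = 0 := by
    intro i hi
    rw [hM]
    exact iter_ver_coeff_lt _ hi
  have hMcoeff : M.coeff (r + 1) =
      ((x.coeff 0 ^ (p - 1)) ^ p ^ r * z.coeff 0) ^ p := by
    rw [hM]
    have hc := iterate_verschiebung_coeff (R := L)
      (frobenius (frobenius^[r] (T ^ (p - 1)) * z)) (r + 1) 0
    rw [zero_add] at hc
    rw [hc, coeff_frobenius_charP, mul_coeff_zero, iterate_frobenius_coeff]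
    congr 2
    rw [hT, ← map_pow, teichmuller_coeff_zero]
  have hMne : M.coeff (r + 1) ≠ 0 := by
    rw [hMcoeff]
    exact pow_ne_zero _ (mul_ne_zero (pow_ne_zero _ (pow_ne_zero _ hx0)) hz0)
  -- T ^ p as a Teichmüller lift
  have hTp : T ^ p = teichmuller p (x.coeff 0 ^ p) := by
    rw [hT, ← map_pow]
  -- coefficients up to r + 1
  have hlow : ∀ i < r + 1, (x ^ p).coeff i = (T ^ p).coeff i := by
    have hmem : x ^ p - T ^ p ∈ RingHom.ker (truncate (p := p) (R := L) (r + 1)) := by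
      have : x ^ p - T ^ p = E + M := by rw [hexp, hMdef]; ring
      rw [this]
      refine Ideal.add_mem _ ?_ ((mem_ker_truncate _ _).mpr hMvan)
      exact (mem_ker_truncate _ _).mpr fun i hi =>
        (mem_ker_truncate _ _).mp hEmem i (by omega)
    have ht : truncate (p := p) (R := L) (r + 1) (x ^ p) = truncate (r + 1) (T ^ p) := by
      rwa [RingHom.mem_ker, map_sub, sub_eq_zero] at hmem
    intro i hi
    have := congrArg (fun v => TruncatedWittVector.coeff ⟨i, hi⟩ v) ht
    simpa only [coeff_truncate] using this
  refine ⟨?_, ?_, ?_⟩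
  · rw [hlow 0 (by omega), hTp, teichmuller_coeff_zero]
  · intro m h1m hmr
    rw [hlow m (by omega), hTp, teichmuller_coeff_pos _ _ m (by omega)]
  · intro hcon
    have htr : truncate (p := p) (R := L) (r + 2) (x ^ p) = truncate (r + 2) (T ^ p) := by
      ext ⟨i, hi⟩
      rw [coeff_truncate, coeff_truncate]
      rcases lt_or_ge i (r + 1) with h | h
      · exact hlow i h
      · have hieq : i = r + 1 := by omega
        subst hieq
        show (x ^ p).coeff (r + 1) = (T ^ p).coeff (r + 1)
        rw [hcon, hTp, teichmuller_coeff_pos _ _ (r + 1) (by omega)]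
    have hmem2 : x ^ p - T ^ p ∈ krn2 := by
      rw [hkrn2, RingHom.mem_ker, map_sub, htr, sub_self]
    have hMmem : M ∈ krn2 := by
      have hMeq : M = x ^ p - T ^ p - E := by rw [hexp]; ring
      rw [hMeq]
      exact Submodule.sub_mem _ hmem2 hEmem
    exact hMne ((mem_ker_truncate _ _).mp hMmem (r + 1) (by omega))

end Key

end Stmt3Aux

/--
Assume `p > 2`. Let `1 ≤ r ≤ n−2` and let
`a = (a₀, 0, …, 0, a_r, a_{r+1}, …, a_{n-1}) ∈ Wₙ(K)ˣ` with `a₀ ≠ 0`, components indexed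
`1` through `r−1` equal to `0`, and `a_r ≠ 0`.  Then the truncation of `a^p` to length
`r+2` equals `(a₀^p, 0, …, 0, a'_{r+1})` with `a'_{r+1} ≠ 0`: the coefficient of `a^p` in
position `0` is `a₀^p`, those in positions `1, …, r` vanish, and that in position `r+1`
is nonzero.
-/
theorem stmt_3 (p n r : ℕ) [Fact p.Prime] (hp2 : 2 < p) (K : Type*) [Field K] [CharP K p]
    (hr1 : 1 ≤ r) (hrn : r + 2 ≤ n)
    (a : TruncatedWittVector p n K)
    (ha0 : a.coeff ⟨0, by omega⟩ ≠ 0)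
    (hmid : ∀ m : Fin n, 1 ≤ (m : ℕ) → (m : ℕ) < r → a.coeff m = 0)
    (har : a.coeff ⟨r, by omega⟩ ≠ 0) :
    (a ^ p).coeff ⟨0, by omega⟩ = a.coeff ⟨0, by omega⟩ ^ p ∧
    (∀ m : Fin n, 1 ≤ (m : ℕ) → (m : ℕ) ≤ r → (a ^ p).coeff m = 0) ∧
    (a ^ p).coeff ⟨r + 1, by omega⟩ ≠ 0 := by
  classical
  have hout : ∀ (i : ℕ) (hi : i < n), a.out.coeff i = a.coeff ⟨i, hi⟩ := fun i hi =>
    TruncatedWittVector.coeff_out a ⟨i, hi⟩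
  have key := Stmt3Aux.key_lemma (p := p) hp2 a.out r hr1
    (by rw [hout 0 (by omega)]; exact ha0)
    (by
      intro i h1 h2
      rw [hout i (by omega)]
      exact hmid ⟨i, by omega⟩ h1 h2)
    (by rw [hout r (by omega)]; exact har)
  have haout : WittVector.truncate n a.out = a := by
    ext i
    rw [WittVector.coeff_truncate, TruncatedWittVector.coeff_out]
  have hpow : ∀ (i : ℕ) (hi : i < n), (a ^ p).coeff ⟨i, hi⟩ = (a.out ^ p).coeff i := by
    intro i hi
    have h1 : a ^ p = WittVector.truncate n (a.out ^ p) := by rw [map_pow, haout]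
    rw [h1, WittVector.coeff_truncate]
  refine ⟨?_, ?_, ?_⟩
  · rw [hpow 0 (by omega), key.1, hout 0 (by omega)]
  · intro m h1 h2
    have hm : (m : ℕ) < n := m.isLt
    have : (a ^ p).coeff ⟨(m : ℕ), hm⟩ = 0 := by
      rw [hpow (m : ℕ) hm]
      exact key.2.1 (m : ℕ) h1 h2
    simpa using this
  · rw [hpow (r + 1) (by omega)]
    exact key.2.2
end
end

section
/- (Hilbert 90 for Witt vector units.) Let L/K be a finite cyclic Galois extension with Galois group generated by σ, acting on W_n(L) componentwise. For x ∈ W_n(L)^×, the norm ∏_{g ∈ Gal(L/K)} g(x) equals 1 in W_n(L)^× if and only if there exists y ∈ W_n(L)^× with x = y·σ(y)^{-1}. -/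
noncomputable section

open WittVector

/-! ### Auxiliary development for Hilbert 90 for Witt vector units -/

set_option linter.unusedSectionVars false

namespace H90Aux

open Finset

/-! #### Generalities on `mapRingHom` -/

section MapRingHom

variable {p n : ℕ} [hp : Fact p.Prime] {R S : Type*} [CommRing R] [CommRing S]

theorem mapRingHom_truncate (f : R →+* S) (w : WittVector p R) :
    TruncatedWittVector.mapRingHom p n f (WittVector.truncate n w)
      = WittVector.truncate n (WittVector.map f w) :=
  RingHom.liftOfRightInverse_comp_apply _ _ _ _ _

theorem mapRingHom_coeff (f : R →+* S) (x : TruncatedWittVector p n R) (i : Fin n) :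
    (TruncatedWittVector.mapRingHom p n f x).coeff i = f (x.coeff i) := by
  obtain ⟨w, rfl⟩ := WittVector.truncate_surjective p n R x
  rw [mapRingHom_truncate, WittVector.coeff_truncate, WittVector.coeff_truncate,
    WittVector.map_coeff]

end MapRingHom

/-! #### Cyclic group reindexing and classical Hilbert 90 (multiplicative and additive) -/

section FieldH90

variable {K L : Type*} [Field K] [Field L] [Algebra K L] [FiniteDimensional K L]
  [IsGalois K L] [Fintype (L ≃ₐ[K] L)]

local notation "G" => L ≃ₐ[K] L
local notation "N" => Fintype.card (L ≃ₐ[K] L)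

theorem pow_bij (σ : G) (hσ : ∀ g : G, g ∈ Subgroup.zpowers σ) :
    Function.Bijective (fun i : Fin N => σ ^ (i : ℕ)) := by
  have hN : orderOf σ = N :=
    (orderOf_eq_card_of_forall_mem_zpowers hσ).trans (Nat.card_eq_fintype_card)
  refine (Fintype.bijective_iff_injective_and_card _).2 ⟨?_, by simp⟩
  intro i j h
  exact Fin.ext (pow_injOn_Iio_orderOf (by simpa [hN] using i.2) (by simpa [hN] using j.2) h)

theorem prod_reindex {M : Type*} [CommMonoid M] (σ : G) (hσ : ∀ g : G, g ∈ Subgroup.zpowers σ)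
    (f : G → M) : ∏ g : G, f g = ∏ i ∈ range N, f (σ ^ i) := by
  rw [← Fin.prod_univ_eq_prod_range]
  exact (Fintype.prod_bijective _ (pow_bij σ hσ) _ _ fun i => rfl).symm

theorem sum_reindex {M : Type*} [AddCommMonoid M] (σ : G) (hσ : ∀ g : G, g ∈ Subgroup.zpowers σ)
    (f : G → M) : ∑ g : G, f g = ∑ i ∈ range N, f (σ ^ i) := by
  rw [← Fin.sum_univ_eq_sum_range]
  exact (Fintype.sum_bijective _ (pow_bij σ hσ) _ _ fun i => rfl).symm

theorem sum_aut_congr {M : Type*} [AddCommMonoid M] (F1 F2 : Fintype G) (f : G → M) :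
    @Finset.sum G M _ (@Finset.univ G F1) f = @Finset.sum G M _ (@Finset.univ G F2) f := by
  congr!

/-- Additive Hilbert 90 for a cyclic extension. -/
theorem additive_h90 (σ : G) (hσ : ∀ g : G, g ∈ Subgroup.zpowers σ)
    (a : L) (ha : ∑ g : G, g a = 0) : ∃ b : L, a = b - σ b := by
  obtain ⟨c, hc0⟩ := Algebra.trace_surjective K L 1
  have hc2 : ∑ g : G, g c = 1 := by
    rw [← sum_aut_congr _ _ fun g => g c, ← trace_eq_sum_automorphisms, hc0, map_one]
  have hc : ∑ i ∈ range N, (σ ^ i) c = 1 := by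
    rw [← sum_reindex σ hσ fun g => g c]; exact hc2
  have hA : ∑ i ∈ range N, (σ ^ i) a = 0 := by rw [← sum_reindex σ hσ fun g => g a]; exact ha
  have hσN : σ ^ N = 1 := pow_card_eq_one
  set t : ℕ → L := fun i => ∑ j ∈ range (i + 1), (σ ^ j) a with ht_def
  have htr : ∀ i, t i = ∑ j ∈ range (i + 1), (σ ^ j) a := fun _ => rfl
  have ht : ∀ i, σ (t i) = t (i + 1) - a := by
    intro i
    have h1 : t (i + 1) = (∑ j ∈ range (i + 1), (σ ^ (j + 1)) a) + a := by
      rw [htr]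
      simpa using Finset.sum_range_succ' (fun j => (σ ^ j) a) (i + 1)
    have h2 : σ (t i) = ∑ j ∈ range (i + 1), (σ ^ (j + 1)) a := by
      rw [htr, map_sum]
      exact Finset.sum_congr rfl fun j _ => by rw [pow_succ']; rfl
    rw [h2, h1]; ring
  refine ⟨∑ i ∈ range N, t i * (σ ^ i) c, ?_⟩
  set b : L := ∑ i ∈ range N, t i * (σ ^ i) c with hb_def
  have hσb : σ b = ∑ i ∈ range N, (t (i + 1) - a) * (σ ^ (i + 1)) c := by
    rw [hb_def, map_sum]
    refine Finset.sum_congr rfl fun i _ => ?_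
    rw [map_mul, ht]
    congr 1
    rw [pow_succ']; rfl
  have tN : t N = a := by
    rw [htr, Finset.sum_range_succ, hA, hσN, zero_add, AlgEquiv.one_apply]
  have t0 : t 0 = a := by rw [htr]; simp
  have S1 : ∑ i ∈ range N, t (i + 1) * (σ ^ (i + 1)) c = b := by
    have e1 := Finset.sum_range_succ (fun i => t i * (σ ^ i) c) N
    have e2 := Finset.sum_range_succ' (fun i => t i * (σ ^ i) c) N
    rw [e2] at e1
    simp only [tN, hσN, t0, pow_zero, AlgEquiv.one_apply] at e1
    rw [← hb_def] at e1
    linear_combination e1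
  have S2 : ∑ i ∈ range N, (σ ^ (i + 1)) c = 1 := by
    have e1 := Finset.sum_range_succ (fun i => (σ ^ i) c) N
    have e2 := Finset.sum_range_succ' (fun i => (σ ^ i) c) N
    rw [e2, hc] at e1
    simp only [hσN, AlgEquiv.one_apply, pow_zero] at e1
    linear_combination e1
  have hfin : σ b = b - a := by
    rw [hσb]
    have hsplit : ∀ i ∈ range N, (t (i + 1) - a) * (σ ^ (i + 1)) c
        = t (i + 1) * (σ ^ (i + 1)) c - a * (σ ^ (i + 1)) c := fun i _ => by ring
    rw [Finset.sum_congr rfl hsplit, Finset.sum_sub_distrib, S1, ← Finset.mul_sum, S2, mul_one]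
  rw [hfin]; ring

/-- Multiplicative Hilbert 90 for a cyclic extension, on field units. -/
theorem mult_h90 (σ : G) (hσ : ∀ g : G, g ∈ Subgroup.zpowers σ)
    (u : Lˣ) (hu : ∏ g : G, g • u = 1) : ∃ ε : Lˣ, u = ε * (σ • ε)⁻¹ := by
  have hN : orderOf σ = N :=
    (orderOf_eq_card_of_forall_mem_zpowers hσ).trans (Nat.card_eq_fintype_card)
  set F : ℕ → Lˣ := fun s => ∏ j ∈ range s, (σ ^ j) • u with hF_def
  have hFr : ∀ s, F s = ∏ j ∈ range s, (σ ^ j) • u := fun _ => rfl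
  have huN : ∏ j ∈ range N, (σ ^ j) • u = 1 := by
    rw [← prod_reindex σ hσ fun g => g • u]; exact hu
  have hFN : ∀ s, F (s + N) = F s := by
    intro s
    rw [hFr, hFr, Finset.prod_range_add]
    have : ∀ j ∈ range N, (σ ^ (s + j)) • u
        = (MulDistribMulAction.toMonoidHom Lˣ (σ ^ s)) ((σ ^ j) • u) := by
      intro j _
      rw [MulDistribMulAction.toMonoidHom_apply, pow_add, mul_smul]
    rw [Finset.prod_congr rfl this, ← map_prod, huN, map_one, mul_one]
  have hFk : ∀ k r, F (r + k * N) = F r := by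
    intro k
    induction k with
    | zero => simp
    | succ k ih => intro r; rw [Nat.succ_mul, ← Nat.add_assoc, hFN, ih]
  have hFmod : ∀ s, F s = F (s % N) := by
    intro s
    conv_lhs => rw [← Nat.mod_add_div' s N]
    exact hFk _ _
  have hFeq : ∀ s t, σ ^ s = σ ^ t → F s = F t := by
    intro s t hst
    have := pow_eq_pow_iff_modEq.1 hst
    rw [hN] at this
    rw [hFmod s, hFmod t, this]
  let e := Equiv.ofBijective _ (pow_bij σ hσ)
  let ι : G → ℕ := fun g => ((e.symm g) : ℕ)
  have hι : ∀ g, σ ^ ι g = g := fun g => e.apply_symm_apply g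
  have hcoc : groupCohomology.IsMulCocycle₁ (fun g => F (ι g)) := by
    intro g h
    show F (ι (g * h)) = g • F (ι h) * F (ι g)
    have h1 : F (ι (g * h)) = F (ι g + ι h) := by
      apply hFeq
      rw [hι, pow_add, hι, hι]
    rw [h1, hFr, hFr, hFr, Finset.prod_range_add]
    have : ∀ j ∈ range (ι h), (σ ^ (ι g + j)) • u
        = (MulDistribMulAction.toMonoidHom Lˣ g) ((σ ^ j) • u) := by
      intro j _
      rw [MulDistribMulAction.toMonoidHom_apply, pow_add, mul_smul, hι]
    rw [Finset.prod_congr rfl this, ← map_prod]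
    rw [mul_comm]
    rfl
  obtain ⟨β, hβ⟩ := groupCohomology.isMulCoboundary₁_of_isMulCocycle₁_of_aut_to_units _ hcoc
  have hσβ : σ • β / β = u := by
    have h1 : F (ι σ) = F 1 := hFeq _ _ (by rw [hι, pow_one])
    have h2 : F 1 = u := by rw [hFr, Finset.prod_range_one, pow_zero, one_smul]
    have hβσ := hβ σ
    dsimp only at hβσ
    rw [h1, h2] at hβσ
    exact hβσ
  refine ⟨β⁻¹, ?_⟩
  have hinv : σ • β⁻¹ = (σ • β)⁻¹ :=
    map_inv (MulDistribMulAction.toMonoidHom Lˣ σ) β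
  rw [hinv, inv_inv, ← hσβ]
  rw [div_eq_mul_inv, mul_comm]

end FieldH90

/-! #### Witt vector coefficient lemmas -/

section WittCoeff

variable {p : ℕ} [hp : Fact p.Prime]

section CommRing
variable {R : Type*} [CommRing R]

theorem iterate_verschiebung_coeff_lt (z : WittVector p R) :
    ∀ {q i : ℕ}, i < q → (verschiebung^[q] z).coeff i = 0 := by
  intro q
  induction q with
  | zero => intro i h; omega
  | succ q ih =>
    intro i h
    rw [Function.iterate_succ_apply']
    match i with
    | 0 => rw [verschiebung_coeff_zero]
    | Nat.succ j =>
      rw [verschiebung_coeff_succ]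
      exact ih (by omega)

theorem truncate_out' {q : ℕ} (x : TruncatedWittVector p q R) :
    WittVector.truncate q x.out = x := by
  apply TruncatedWittVector.ext
  intro i
  rw [WittVector.coeff_truncate, TruncatedWittVector.coeff_out]

theorem out_coeff_lowzero {q a : ℕ} (ha : a ≤ q) (x : TruncatedWittVector p q R)
    (hx : ∀ i : Fin q, (i : ℕ) < a → x.coeff i = 0) :
    ∀ i, i < a → x.out.coeff i = 0 := by
  intro i hi
  have hiq : i < q := lt_of_lt_of_le hi ha
  have := TruncatedWittVector.coeff_out x ⟨i, hiq⟩
  rw [this]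
  exact hx _ hi

variable [CharP R p]

/-- The product of two truncated Witt vectors whose low coefficients vanish strongly enough
is zero. -/
theorem mul_eq_zero_of_lowzero {q a b : ℕ} (ha : a ≤ q) (hb : b ≤ q) (hab : q ≤ a + b)
    (x y : TruncatedWittVector p q R)
    (hx : ∀ i : Fin q, (i : ℕ) < a → x.coeff i = 0)
    (hy : ∀ i : Fin q, (i : ℕ) < b → y.coeff i = 0) :
    x * y = 0 := by
  have hX := WittVector.eq_iterate_verschiebung (out_coeff_lowzero ha x hx)
  have hY := WittVector.eq_iterate_verschiebung (out_coeff_lowzero hb y hy)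
  have hxy : x * y = WittVector.truncate q (x.out * y.out) := by
    rw [map_mul, truncate_out', truncate_out']
  rw [hxy]
  apply TruncatedWittVector.ext
  intro i
  rw [WittVector.coeff_truncate, TruncatedWittVector.coeff_zero]
  conv_lhs => rw [hX, hY]
  rw [WittVector.iterate_verschiebung_mul]
  exact iterate_verschiebung_coeff_lt _ (lt_of_lt_of_le i.2 hab)

/-- Addition is computed coefficientwise at index `a` on elements whose coefficients
below `a` vanish. -/
theorem add_coeff_of_lowzero {q : ℕ} (a : Fin q) (x y : TruncatedWittVector p q R)
    (hx : ∀ i : Fin q, (i : ℕ) < (a : ℕ) → x.coeff i = 0)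
    (hy : ∀ i : Fin q, (i : ℕ) < (a : ℕ) → y.coeff i = 0) :
    (x + y).coeff a = x.coeff a + y.coeff a := by
  have hX := WittVector.eq_iterate_verschiebung (out_coeff_lowzero (le_of_lt a.2) x hx)
  have hY := WittVector.eq_iterate_verschiebung (out_coeff_lowzero (le_of_lt a.2) y hy)
  have hxy : x + y = WittVector.truncate q (x.out + y.out) := by
    rw [map_add, truncate_out', truncate_out']
  rw [hxy, WittVector.coeff_truncate]
  conv_lhs => rw [hX, hY, ← iterate_map_add]
  have h1 := WittVector.iterate_verschiebung_coeff (p := p)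
    (x.out.shift (a : ℕ) + y.out.shift (a : ℕ)) (a : ℕ) 0
  rw [zero_add] at h1
  rw [h1]
  have h2 : (x.out.shift (a : ℕ) + y.out.shift (a : ℕ)).coeff 0
      = (x.out.shift (a : ℕ)).coeff 0 + (y.out.shift (a : ℕ)).coeff 0 :=
    WittVector.add_coeff_zero _ _
  rw [h2, WittVector.shift_coeff, WittVector.shift_coeff, Nat.add_zero]
  rw [TruncatedWittVector.coeff_out, TruncatedWittVector.coeff_out]

end CommRing

section Field
variable {k : Type*} [Field k] [CharP k p]

/-- `coeff 0` as a ring hom on nonempty truncations. -/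
noncomputable def coeffZero (q : ℕ) (hq : 0 < q) : TruncatedWittVector p q k →+* k :=
  RingHom.liftOfRightInverse (WittVector.truncate q) TruncatedWittVector.out
    (fun x => x.truncateFun_out)
    ⟨WittVector.constantCoeff, by
      intro x hx
      rw [RingHom.mem_ker] at hx ⊢
      rw [← RingHom.mem_ker, WittVector.mem_ker_truncate] at hx
      rw [WittVector.constantCoeff_apply]
      exact hx 0 hq⟩

theorem coeffZero_apply {q : ℕ} (hq : 0 < q) (x : TruncatedWittVector p q k) :
    coeffZero q hq x = x.coeff ⟨0, hq⟩ := by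
  obtain ⟨w, rfl⟩ := WittVector.truncate_surjective p q k x
  have h1 : coeffZero q hq (WittVector.truncate q w) = WittVector.constantCoeff w :=
    RingHom.liftOfRightInverse_comp_apply _ _ _ _ _
  rw [h1, WittVector.coeff_truncate]
  rfl

theorem isUnit_of_coeffZero_ne_zero {q : ℕ} (hq : 0 < q) (x : TruncatedWittVector p q k)
    (hx : x.coeff ⟨0, hq⟩ ≠ 0) : IsUnit x := by
  have hout : x.out.coeff 0 ≠ 0 := by
    rw [← TruncatedWittVector.coeff_out x ⟨0, hq⟩] at hx
    exact hx
  have := WittVector.isUnit_of_coeff_zero_ne_zero x.out hout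
  have h2 := (WittVector.truncate q (p := p) (R := k)).isUnit_map this
  rwa [truncate_out'] at h2

theorem unit_coeffZero_ne_zero {q : ℕ} (hq : 0 < q) (u : (TruncatedWittVector p q k)ˣ) :
    (u : TruncatedWittVector p q k).coeff ⟨0, hq⟩ ≠ 0 := by
  intro h
  have := congrArg (coeffZero (p := p) q hq) u.mul_inv
  rw [map_mul, map_one, coeffZero_apply, h, zero_mul] at this
  exact zero_ne_one this

/-- Units lift along truncation. -/
theorem exists_unit_lift {m : ℕ} (hm : 0 < m) (u : (TruncatedWittVector p m k)ˣ) :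
    ∃ v : (TruncatedWittVector p (m + 1) k)ˣ,
      TruncatedWittVector.truncate (Nat.le_succ m) (v : TruncatedWittVector p (m + 1) k) = u := by
  obtain ⟨w, hw⟩ := TruncatedWittVector.truncate_surjective (p := p) (R := k) (Nat.le_succ m)
    (u : TruncatedWittVector p m k)
  have hw0 : w.coeff ⟨0, Nat.succ_pos m⟩ ≠ 0 := by
    have h1 : (TruncatedWittVector.truncate (Nat.le_succ m) w).coeff ⟨0, hm⟩
        = w.coeff ⟨0, Nat.succ_pos m⟩ := by
      rw [TruncatedWittVector.coeff_truncate]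
      rfl
    rw [hw] at h1
    rw [← h1]
    exact unit_coeffZero_ne_zero hm u
  obtain ⟨v, hv⟩ := isUnit_of_coeffZero_ne_zero (Nat.succ_pos m) w hw0
  exact ⟨v, by rw [hv, hw]⟩

end Field

end WittCoeff

/-! #### The Galois action on truncated Witt vector units -/

section Action

variable {p : ℕ} [hp : Fact p.Prime] {K L : Type*} [Field K] [Field L] [Algebra K L]
  [FiniteDimensional K L] [IsGalois K L] [Fintype (L ≃ₐ[K] L)] [CharP L p]

local notation "G" => L ≃ₐ[K] L

/-- The action of a Galois automorphism on truncated Witt vector units. -/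
noncomputable def wAct (q : ℕ) (g : G) :
    (TruncatedWittVector p q L)ˣ →* (TruncatedWittVector p q L)ˣ :=
  Units.map (TruncatedWittVector.mapRingHom p q (RingHomClass.toRingHom g)).toMonoidHom

theorem wAct_val_coeff (q : ℕ) (g : G) (x : (TruncatedWittVector p q L)ˣ) (i : Fin q) :
    ((wAct q g x : (TruncatedWittVector p q L)ˣ) : TruncatedWittVector p q L).coeff i
      = g ((x : TruncatedWittVector p q L).coeff i) := by
  show ((TruncatedWittVector.mapRingHom p q (RingHomClass.toRingHom g))
    (x : TruncatedWittVector p q L)).coeff i = _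
  rw [mapRingHom_coeff]
  rfl

theorem wAct_mul_apply (q : ℕ) (g h : G) (x : (TruncatedWittVector p q L)ˣ) :
    wAct q (g * h) x = wAct q g (wAct q h x) := by
  apply Units.ext
  apply TruncatedWittVector.ext
  intro i
  rw [wAct_val_coeff, wAct_val_coeff, wAct_val_coeff]
  rfl

theorem wNorm_mul (q : ℕ) (x y : (TruncatedWittVector p q L)ˣ) :
    ∏ g : G, wAct q g (x * y) = (∏ g : G, wAct q g x) * (∏ g : G, wAct q g y) := by
  rw [← Finset.prod_mul_distrib]
  exact Finset.prod_congr rfl fun g _ => map_mul _ _ _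

theorem wNorm_inv (q : ℕ) (x : (TruncatedWittVector p q L)ˣ) :
    ∏ g : G, wAct q g x⁻¹ = (∏ g : G, wAct q g x)⁻¹ := by
  rw [← Finset.prod_inv_distrib]
  exact Finset.prod_congr rfl fun g _ => map_inv _ _

theorem wNorm_wAct (q : ℕ) (σ : G) (x : (TruncatedWittVector p q L)ˣ) :
    ∏ g : G, wAct q g (wAct q σ x) = ∏ g : G, wAct q g x := by
  refine (Fintype.prod_bijective (fun g : G => g * σ⁻¹) (Group.mulRight_bijective σ⁻¹)
    _ _ fun g => ?_).symm
  rw [← wAct_mul_apply, inv_mul_cancel_right]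

theorem wNorm_coboundary (q : ℕ) (σ : G) (y : (TruncatedWittVector p q L)ˣ) :
    ∏ g : G, wAct q g (y * (wAct q σ y)⁻¹) = 1 := by
  rw [wNorm_mul, wNorm_inv, wNorm_wAct, mul_inv_cancel]

end Action


/-! #### The kernel step of the dévissage -/

section Steps

variable {p : ℕ} [hp : Fact p.Prime] {K L : Type*} [Field K] [Field L] [Algebra K L]
  [FiniteDimensional K L] [IsGalois K L] [Fintype (L ≃ₐ[K] L)] [CharP L p]

local notation "G" => L ≃ₐ[K] L

theorem kernel_step {m : ℕ} (hm : 0 < m) (σ : G) (hσ : ∀ g : G, g ∈ Subgroup.zpowers σ)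
    (z : (TruncatedWittVector p (m + 1) L)ˣ)
    (hz : TruncatedWittVector.truncate (Nat.le_succ m)
      ((z : (TruncatedWittVector p (m + 1) L)ˣ) : TruncatedWittVector p (m + 1) L) = 1)
    (hnz : ∏ g : G, wAct (m + 1) g z = 1) :
    ∃ y : (TruncatedWittVector p (m + 1) L)ˣ, z = y * (wAct (m + 1) σ y)⁻¹ := by
  classical
  set tr : TruncatedWittVector p (m + 1) L →+* TruncatedWittVector p m L :=
    TruncatedWittVector.truncate (Nat.le_succ m) with htr_def
  -- low coefficients vanish for elements killed by `tr`
  have hlow : ∀ w : TruncatedWittVector p (m + 1) L, tr w = 0 →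
      ∀ i : Fin (m + 1), (i : ℕ) < m → w.coeff i = 0 := by
    intro w hw i hi
    have h1 := TruncatedWittVector.coeff_truncate (Nat.le_succ m) ⟨(i : ℕ), hi⟩ w
    rw [htr_def] at hw
    rw [hw, TruncatedWittVector.coeff_zero] at h1
    have h2 : Fin.castLE (Nat.le_succ m) ⟨(i : ℕ), hi⟩ = i := Fin.ext rfl
    rw [h2] at h1
    exact h1.symm
  have hmul0 : ∀ w1 w2 : TruncatedWittVector p (m + 1) L, tr w1 = 0 → tr w2 = 0 →
      w1 * w2 = 0 := by
    intro w1 w2 h1 h2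
    exact mul_eq_zero_of_lowzero (a := m) (b := m) (Nat.le_succ m) (Nat.le_succ m)
      (by omega) w1 w2 (hlow w1 h1) (hlow w2 h2)
  have hψ_add : ∀ w1 w2 : TruncatedWittVector p (m + 1) L, tr w1 = 0 → tr w2 = 0 →
      (w1 + w2).coeff (Fin.last m) = w1.coeff (Fin.last m) + w2.coeff (Fin.last m) := by
    intro w1 w2 h1 h2
    refine add_coeff_of_lowzero (Fin.last m) w1 w2 ?_ ?_
    · intro i hi; exact hlow w1 h1 i (by rwa [Fin.val_last] at hi)
    · intro i hi; exact hlow w2 h2 i (by rwa [Fin.val_last] at hi)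
  have hgood_mul : ∀ u v : (TruncatedWittVector p (m + 1) L)ˣ,
      tr (↑u - 1) = 0 → tr (↑v - 1) = 0 →
      ((↑(u * v) - 1 : TruncatedWittVector p (m + 1) L)
          = (↑u - 1) + (↑v - 1)) ∧ tr (↑(u * v) - 1) = 0 := by
    intro u v hu hv
    have hprod0 : ((↑u - 1) * (↑v - 1) : TruncatedWittVector p (m + 1) L) = 0 :=
      hmul0 _ _ hu hv
    have heq : (↑(u * v) - 1 : TruncatedWittVector p (m + 1) L) = (↑u - 1) + (↑v - 1) := by
      rw [Units.val_mul]
      linear_combination hprod0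
    refine ⟨heq, ?_⟩
    rw [heq, map_add, hu, hv, add_zero]
  -- the action preserves "goodness" and acts on the top coefficient
  have hval_act : ∀ (g : G) (u : (TruncatedWittVector p (m + 1) L)ˣ),
      (↑(wAct (m + 1) g u) - 1 : TruncatedWittVector p (m + 1) L)
        = TruncatedWittVector.mapRingHom p (m + 1) (RingHomClass.toRingHom g) (↑u - 1) := by
    intro g u
    rw [map_sub, map_one]
    rfl
  have hcomm : ∀ (g : G) (w : TruncatedWittVector p (m + 1) L),
      tr (TruncatedWittVector.mapRingHom p (m + 1) (RingHomClass.toRingHom g) w)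
        = TruncatedWittVector.mapRingHom p m (RingHomClass.toRingHom g) (tr w) := by
    intro g w
    apply TruncatedWittVector.ext
    intro i
    rw [htr_def, TruncatedWittVector.coeff_truncate, mapRingHom_coeff, mapRingHom_coeff,
      TruncatedWittVector.coeff_truncate]
  have hg_good : ∀ (g : G) (u : (TruncatedWittVector p (m + 1) L)ˣ), tr (↑u - 1) = 0 →
      tr (↑(wAct (m + 1) g u) - 1) = 0 := by
    intro g u hu
    rw [hval_act, hcomm, hu, map_zero]
  have hg_psi : ∀ (g : G) (u : (TruncatedWittVector p (m + 1) L)ˣ),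
      (↑(wAct (m + 1) g u) - 1 : TruncatedWittVector p (m + 1) L).coeff (Fin.last m)
        = g ((↑u - 1 : TruncatedWittVector p (m + 1) L).coeff (Fin.last m)) := by
    intro g u
    rw [hval_act, mapRingHom_coeff]
    rfl
  -- goodness of z
  have hz' : tr (↑z - 1) = 0 := by rw [map_sub, map_one, htr_def, hz, sub_self]
  -- the top coefficient of products of good units is additive
  have hprod : ∀ (s : Finset G) (f : G → (TruncatedWittVector p (m + 1) L)ˣ),
      (∀ g, tr (↑(f g) - 1) = 0) →
      tr (↑(∏ g ∈ s, f g) - 1) = 0 ∧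
        (↑(∏ g ∈ s, f g) - 1 : TruncatedWittVector p (m + 1) L).coeff (Fin.last m)
          = ∑ g ∈ s, (↑(f g) - 1 : TruncatedWittVector p (m + 1) L).coeff (Fin.last m) := by
    intro s f hf
    induction s using Finset.induction_on with
    | empty =>
      constructor
      · rw [Finset.prod_empty, Units.val_one, sub_self, map_zero]
      · rw [Finset.prod_empty, Units.val_one, sub_self, Finset.sum_empty,
          TruncatedWittVector.coeff_zero]
    | @insert a s' ha ih =>
      rw [Finset.prod_insert ha, Finset.sum_insert ha]
      obtain ⟨ih1, ih2⟩ := ih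
      obtain ⟨heq, hgood⟩ := hgood_mul (f a) (∏ g ∈ s', f g) (hf a) ih1
      refine ⟨hgood, ?_⟩
      rw [heq, hψ_add _ _ (hf a) ih1, ih2]
  -- the trace of the top coefficient of z vanishes
  set a : L := (↑z - 1 : TruncatedWittVector p (m + 1) L).coeff (Fin.last m) with ha_def
  have htrace : ∑ g : G, g a = 0 := by
    have h := hprod Finset.univ (fun g => wAct (m + 1) g z) (fun g => hg_good g z hz')
    rw [hnz] at h
    have h2 := h.2
    rw [Units.val_one, sub_self, TruncatedWittVector.coeff_zero] at h2
    calc ∑ g : G, g a = ∑ g : G,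
          (↑(wAct (m + 1) g z) - 1 : TruncatedWittVector p (m + 1) L).coeff (Fin.last m) :=
        Finset.sum_congr rfl fun g _ => (hg_psi g z).symm
      _ = 0 := h2.symm
  obtain ⟨b, hb⟩ := additive_h90 σ hσ a htrace
  -- construct the unit `y = 1 + V^m b`
  set wb : TruncatedWittVector p (m + 1) L :=
    TruncatedWittVector.mk p (fun i => if (i : ℕ) = m then b else 0) with hwb_def
  have hwb_tr : tr wb = 0 := by
    apply TruncatedWittVector.ext
    intro i
    rw [htr_def, TruncatedWittVector.coeff_truncate, hwb_def, TruncatedWittVector.coeff_mk,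
      TruncatedWittVector.coeff_zero]
    exact if_neg (by have := i.2; simp only [Fin.coe_castLE]; omega)
  have hwb2 : wb * wb = 0 := hmul0 _ _ hwb_tr hwb_tr
  have hwb_psi : wb.coeff (Fin.last m) = b := by
    rw [hwb_def, TruncatedWittVector.coeff_mk, if_pos (Fin.val_last m)]
  set y : (TruncatedWittVector p (m + 1) L)ˣ :=
    Units.mkOfMulEqOne (1 + wb) (1 - wb) (by linear_combination -hwb2) with hy_def
  have hy_val : ((y : (TruncatedWittVector p (m + 1) L)ˣ) :
      TruncatedWittVector p (m + 1) L) = 1 + wb := rfl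
  have hy_inv : ((y⁻¹ : (TruncatedWittVector p (m + 1) L)ˣ) :
      TruncatedWittVector p (m + 1) L) = 1 - wb := rfl
  have hy_good : tr (↑y - 1) = 0 := by
    rw [hy_val, add_sub_cancel_left]
    exact hwb_tr
  have hy_psi : (↑y - 1 : TruncatedWittVector p (m + 1) L).coeff (Fin.last m) = b := by
    rw [hy_val, add_sub_cancel_left, hwb_psi]
  have hyi_good : tr (↑y⁻¹ - 1) = 0 := by
    rw [hy_inv]
    have h3 : (1 : TruncatedWittVector p (m + 1) L) - wb - 1 = -wb := by ring
    rw [h3, map_neg, hwb_tr, neg_zero]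
  have hyi_psi : (↑y⁻¹ - 1 : TruncatedWittVector p (m + 1) L).coeff (Fin.last m) = -b := by
    have hsum : ((↑y - 1) + (↑y⁻¹ - 1) : TruncatedWittVector p (m + 1) L) = 0 := by
      rw [hy_val, hy_inv]; ring
    have h0 := hψ_add _ _ hy_good hyi_good
    rw [hsum, TruncatedWittVector.coeff_zero, hy_psi] at h0
    linear_combination -h0
  -- conclude
  have hσy_good : tr (↑(wAct (m + 1) σ y) - 1) = 0 := hg_good σ y hy_good
  have hσy_psi : (↑(wAct (m + 1) σ y) - 1 :
      TruncatedWittVector p (m + 1) L).coeff (Fin.last m) = σ b := by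
    rw [hg_psi, hy_psi]
  obtain ⟨heq1, hgood1⟩ := hgood_mul z (wAct (m + 1) σ y) hz' hσy_good
  obtain ⟨heq2, hgood2⟩ := hgood_mul (z * wAct (m + 1) σ y) y⁻¹ hgood1 hyi_good
  have hψw : (↑(z * wAct (m + 1) σ y * y⁻¹) - 1 :
      TruncatedWittVector p (m + 1) L).coeff (Fin.last m) = 0 := by
    rw [heq2, hψ_add _ _ hgood1 hyi_good, heq1, hψ_add _ _ hz' hσy_good, ← ha_def,
      hσy_psi, hyi_psi]
    linear_combination hb
  have hw1 : (↑(z * wAct (m + 1) σ y * y⁻¹) - 1 :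
      TruncatedWittVector p (m + 1) L) = 0 := by
    apply TruncatedWittVector.ext
    intro i
    rw [TruncatedWittVector.coeff_zero]
    by_cases hi : (i : ℕ) < m
    · exact hlow _ hgood2 i hi
    · have hieq : i = Fin.last m := Fin.ext (by have := i.2; rw [Fin.val_last]; omega)
      rw [hieq]
      exact hψw
  have hw_eq : z * wAct (m + 1) σ y * y⁻¹ = 1 := Units.ext (by
    rw [Units.val_one]
    exact sub_eq_zero.mp hw1)
  refine ⟨y, ?_⟩
  have h3 : z * wAct (m + 1) σ y = y := mul_inv_eq_one.mp hw_eq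
  exact eq_mul_inv_of_mul_eq h3

theorem base_step (σ : G) (hσ : ∀ g : G, g ∈ Subgroup.zpowers σ)
    (z : (TruncatedWittVector p 1 L)ˣ) (hnz : ∏ g : G, wAct 1 g z = 1) :
    ∃ y : (TruncatedWittVector p 1 L)ˣ, z = y * (wAct 1 σ y)⁻¹ := by
  set ψ : (TruncatedWittVector p 1 L)ˣ →* Lˣ :=
    Units.map (coeffZero (p := p) 1 one_pos).toMonoidHom with hψ_def
  have hψval : ∀ u : (TruncatedWittVector p 1 L)ˣ,
      ((ψ u : Lˣ) : L) = ((u : (TruncatedWittVector p 1 L)ˣ) :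
        TruncatedWittVector p 1 L).coeff ⟨0, one_pos⟩ := by
    intro u
    rw [hψ_def]
    show coeffZero (p := p) 1 one_pos _ = _
    rw [coeffZero_apply]
  have hψ_inj : Function.Injective ψ := by
    intro u v huv
    apply Units.ext
    apply TruncatedWittVector.ext
    intro i
    have hi : i = ⟨0, one_pos⟩ := Subsingleton.elim i _
    rw [hi, ← hψval u, ← hψval v, huv]
  have hψ_act : ∀ (g : G) (u : (TruncatedWittVector p 1 L)ˣ),
      ψ (wAct 1 g u) = g • ψ u := by
    intro g u
    apply Units.ext
    have hL : ((ψ (wAct 1 g u) : Lˣ) : L)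
        = g (((u : (TruncatedWittVector p 1 L)ˣ) :
            TruncatedWittVector p 1 L).coeff ⟨0, one_pos⟩) := by
      rw [hψval, wAct_val_coeff]
    have hR : ((g • ψ u : Lˣ) : L)
        = g (((u : (TruncatedWittVector p 1 L)ˣ) :
            TruncatedWittVector p 1 L).coeff ⟨0, one_pos⟩) := by
      rw [AlgEquiv.smul_units_def, Units.coe_map, hψval]
      rfl
    exact hL.trans hR.symm
  have hu : ∏ g : G, g • ψ z = 1 := by
    calc ∏ g : G, g • ψ z = ∏ g : G, ψ (wAct 1 g z) :=
          Finset.prod_congr rfl fun g _ => (hψ_act g z).symm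
      _ = ψ (∏ g : G, wAct 1 g z) := (map_prod ψ _ _).symm
      _ = 1 := by rw [hnz, map_one]
  obtain ⟨ε, hε⟩ := mult_h90 σ hσ (ψ z) hu
  have hmk : (TruncatedWittVector.mk p (fun _ : Fin 1 => (ε : L))).coeff ⟨0, one_pos⟩
      = (ε : L) := TruncatedWittVector.coeff_mk _ _
  have hunit : IsUnit (TruncatedWittVector.mk p (fun _ : Fin 1 => (ε : L))) :=
    isUnit_of_coeffZero_ne_zero one_pos _ (by rw [hmk]; exact ε.ne_zero)
  obtain ⟨y, hy⟩ := hunit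
  have hψy : ψ y = ε := by
    apply Units.ext
    rw [hψval, hy, hmk]
  refine ⟨y, hψ_inj ?_⟩
  rw [map_mul, map_inv, hψ_act, hψy, hε]

theorem key (σ : G) (hσ : ∀ g : G, g ∈ Subgroup.zpowers σ) :
    ∀ (q : ℕ) (x : (TruncatedWittVector p q L)ˣ), (∏ g : G, wAct q g x) = 1 →
      ∃ y : (TruncatedWittVector p q L)ˣ, x = y * (wAct q σ y)⁻¹ := by
  intro q
  induction q with
  | zero =>
    intro x _
    haveI : Subsingleton (TruncatedWittVector p 0 L) :=
      ⟨fun a b => TruncatedWittVector.ext fun i => i.elim0⟩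
    exact ⟨1, Units.ext (Subsingleton.elim _ _)⟩
  | succ m ih =>
    intro x hx
    rcases Nat.eq_zero_or_pos m with hm | hm
    · subst hm
      exact base_step σ hσ x hx
    · set tr : (TruncatedWittVector p (m + 1) L)ˣ →* (TruncatedWittVector p m L)ˣ :=
        Units.map (TruncatedWittVector.truncate (p := p) (R := L)
          (Nat.le_succ m)).toMonoidHom with htr_def
      have htr_act : ∀ (g : G) (u : (TruncatedWittVector p (m + 1) L)ˣ),
          tr (wAct (m + 1) g u) = wAct m g (tr u) := by
        intro g u
        apply Units.ext
        apply TruncatedWittVector.ext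
        intro i
        show (TruncatedWittVector.truncate (Nat.le_succ m)
          ((wAct (m + 1) g u : (TruncatedWittVector p (m + 1) L)ˣ) :
            TruncatedWittVector p (m + 1) L)).coeff i = _
        rw [TruncatedWittVector.coeff_truncate, wAct_val_coeff]
        show _ = (TruncatedWittVector.mapRingHom p m (RingHomClass.toRingHom g)
          (TruncatedWittVector.truncate (Nat.le_succ m)
            ((u : (TruncatedWittVector p (m + 1) L)ˣ) :
              TruncatedWittVector p (m + 1) L))).coeff i
        rw [mapRingHom_coeff, TruncatedWittVector.coeff_truncate]
        rfl
      have hx' : ∏ g : G, wAct m g (tr x) = 1 := by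
        calc ∏ g : G, wAct m g (tr x) = ∏ g : G, tr (wAct (m + 1) g x) :=
              Finset.prod_congr rfl fun g _ => (htr_act g x).symm
          _ = tr (∏ g : G, wAct (m + 1) g x) := (map_prod tr _ _).symm
          _ = 1 := by rw [hx, map_one]
      obtain ⟨y', hy'⟩ := ih (tr x) hx'
      obtain ⟨y₁, hy₁⟩ := exists_unit_lift hm y'
      have hy₁' : tr y₁ = y' := Units.ext hy₁
      have hzc : tr (x * (y₁ * (wAct (m + 1) σ y₁)⁻¹)⁻¹) = 1 := by
        rw [map_mul, map_inv, map_mul, map_inv, htr_act, hy₁', ← hy', mul_inv_cancel]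
      have hnzc : ∏ g : G, wAct (m + 1) g (x * (y₁ * (wAct (m + 1) σ y₁)⁻¹)⁻¹) = 1 := by
        rw [wNorm_mul, wNorm_inv, hx, one_mul, wNorm_coboundary, inv_one]
      have hz1 : TruncatedWittVector.truncate (Nat.le_succ m)
          (((x * (y₁ * (wAct (m + 1) σ y₁)⁻¹)⁻¹ : (TruncatedWittVector p (m + 1) L)ˣ)) :
            TruncatedWittVector p (m + 1) L) = 1 := congrArg Units.val hzc
      obtain ⟨y₂, hy₂⟩ := kernel_step hm σ hσ _ hz1 hnzc
      refine ⟨y₂ * y₁, ?_⟩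
      have hx2 : x = (x * (y₁ * (wAct (m + 1) σ y₁)⁻¹)⁻¹) * (y₁ * (wAct (m + 1) σ y₁)⁻¹) := by
        rw [mul_assoc, inv_mul_cancel, mul_one]
      rw [hx2, hy₂, map_mul, mul_inv]
      exact mul_mul_mul_comm _ _ _ _

end Steps

end H90Aux


/--
**Hilbert 90 for Witt vector units.** Let `L/K` be a finite cyclic Galois
extension with Galois group generated by `σ`, acting on `Wₙ(L)` componentwise. For
`x ∈ Wₙ(L)ˣ`, the norm `∏_{g ∈ Gal(L/K)} g(x)` equals `1` if and only if there exists
`y ∈ Wₙ(L)ˣ` with `x = y·σ(y)⁻¹`.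
-/
theorem stmt_5 (p n : ℕ) [Fact p.Prime] (K L : Type*) [Field K] [CharP K p]
    [Field L] [Algebra K L] [FiniteDimensional K L] [IsGalois K L]
    [Fintype (L ≃ₐ[K] L)]
    (σ : L ≃ₐ[K] L) (hσ : ∀ g : L ≃ₐ[K] L, g ∈ Subgroup.zpowers σ)
    (x : (TruncatedWittVector p n L)ˣ) :
    (∏ g : L ≃ₐ[K] L,
        Units.map (TruncatedWittVector.mapRingHom p n
          (RingHomClass.toRingHom g)).toMonoidHom x) = 1 ↔
      ∃ y : (TruncatedWittVector p n L)ˣ,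
        x = y * (Units.map (TruncatedWittVector.mapRingHom p n
          (RingHomClass.toRingHom σ)).toMonoidHom y)⁻¹ := by
  haveI : CharP L p := charP_of_injective_algebraMap (algebraMap K L).injective p
  constructor
  · intro h
    exact H90Aux.key σ hσ n x h
  · rintro ⟨y, rfl⟩
    exact H90Aux.wNorm_coboundary n σ y
end
end
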